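/- arXiv:1206.0525 — 6 statements merged into one kernel-verified Lean document; each statement's English description precedes it below -/
import Mathlib

section
/- Let U ⊆ ℂ be open and let g : U → ℂ be holomorphic. Define E : U → ℝ by E(z) = 1 + |g'(z)|², regarded as a function of the real coordinates (x,y) with z = x + iy. Then at every point of U one has E_{xx} + E_{yy} = 4|g''|², E_x² + E_y² = 4|g'|²·|g''|², and consequently E·(E_{xx} + E_{yy}) − (E_x² + E_y²) = 4|g''|²; in particular (1/(2E³))·[E·(E_{xx}+E_{yy}) − (E_x²+E_y²)] = 2|g''|²/E³. -/
open Complex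

lemma aux3 {F G : ℂ → ℂ} {z b c : ℂ} (hF : HasDerivAt F b z) (hG : HasDerivAt G c z) (v : ℂ) :
    fderiv ℝ (fun w => 2 * ((starRingEnd ℂ) (F w) * G w).re) z v
      = 2 * ((starRingEnd ℂ) (b * v) * G z + (starRingEnd ℂ) (F z) * (c * v)).re := by
  have hB : HasFDerivAt F ((ContinuousLinearMap.smulRight (1 : ℂ →L[ℂ] ℂ) b).restrictScalars ℝ) z :=
    hF.hasFDerivAt.restrictScalars ℝ
  have hC : HasFDerivAt G ((ContinuousLinearMap.smulRight (1 : ℂ →L[ℂ] ℂ) c).restrictScalars ℝ) z :=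
    hG.hasFDerivAt.restrictScalars ℝ
  have hconj : HasFDerivAt (fun w => (starRingEnd ℂ) (F w))
      ((Complex.conjCLE.toContinuousLinearMap).comp
        ((ContinuousLinearMap.smulRight (1 : ℂ →L[ℂ] ℂ) b).restrictScalars ℝ)) z :=
    (Complex.conjCLE.toContinuousLinearMap.hasFDerivAt).comp z hB
  have hmul := hconj.mul hC
  have hre := (Complex.reCLM.hasFDerivAt).comp z hmul
  have hfin := hre.const_mul (2 : ℝ)
  have hfin' : HasFDerivAt (fun w => 2 * ((starRingEnd ℂ) (F w) * G w).re)
      ((2:ℝ) • Complex.reCLM.comp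
        ((starRingEnd ℂ) (F z) • ContinuousLinearMap.restrictScalars ℝ (ContinuousLinearMap.smulRight 1 c) +
          G z • (Complex.conjCLE.toContinuousLinearMap).comp
            (ContinuousLinearMap.restrictScalars ℝ (ContinuousLinearMap.smulRight 1 b)))) z := hfin
  rw [hfin'.fderiv]
  simp [Complex.conjCLE_apply]
  ring

-- F real-diff building block: derivative of 1 + abs(F)^2
lemma aux1 {F : ℂ → ℂ} {z b : ℂ} (hF : HasDerivAt F b z) :
    HasFDerivAt (fun w => 1 + ‖F w‖ ^ 2)
      (2 • ((innerSL ℝ (F z)).comp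
        ((ContinuousLinearMap.smulRight (1 : ℂ →L[ℂ] ℂ) b).restrictScalars ℝ))) z := by
  have h1 : HasFDerivAt F ((ContinuousLinearMap.smulRight (1 : ℂ →L[ℂ] ℂ) b).restrictScalars ℝ) z :=
    hF.hasFDerivAt.restrictScalars ℝ
  have h2 := h1.norm_sq.const_add (1 : ℝ)
  simpa using h2

lemma aux2 {F : ℂ → ℂ} {z b : ℂ} (hF : HasDerivAt F b z) (v : ℂ) :
    fderiv ℝ (fun w => 1 + ‖F w‖ ^ 2) z v
      = 2 * ((starRingEnd ℂ) (F z) * (b * v)).re := by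
  rw [(aux1 hF).fderiv]
  simp [Complex.inner, two_smul]
  ring

/-- For `g` holomorphic on an open set `U ⊆ ℂ`, the function
`E(z) = 1 + |g'(z)|²` (viewed as a function of the real coordinates of `z`)
satisfies `E_{xx} + E_{yy} = 4|g''|²`, `E_x² + E_y² = 4|g'|²|g''|²`, hence
`E(E_{xx}+E_{yy}) − (E_x²+E_y²) = 4|g''|²` and
`(1/(2E³))·[E(E_{xx}+E_{yy}) − (E_x²+E_y²)] = 2|g''|²/E³` on `U`. -/
theorem stmt0 (U : Set ℂ) (hU : IsOpen U) (g : ℂ → ℂ)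
    (hg : DifferentiableOn ℂ g U)
    (E : ℂ → ℝ) (hE : ∀ z, E z = 1 + ‖deriv g z‖ ^ 2)
    (Ex Ey Exx Eyy : ℂ → ℝ)
    (hEx : ∀ z, Ex z = fderiv ℝ E z 1)
    (hEy : ∀ z, Ey z = fderiv ℝ E z Complex.I)
    (hExx : ∀ z, Exx z = fderiv ℝ Ex z 1)
    (hEyy : ∀ z, Eyy z = fderiv ℝ Ey z Complex.I) :
    ∀ z ∈ U,
      Exx z + Eyy z = 4 * ‖deriv (deriv g) z‖ ^ 2 ∧
      (Ex z) ^ 2 + (Ey z) ^ 2 =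
        4 * ‖deriv g z‖ ^ 2 * ‖deriv (deriv g) z‖ ^ 2 ∧
      E z * (Exx z + Eyy z) - ((Ex z) ^ 2 + (Ey z) ^ 2) =
        4 * ‖deriv (deriv g) z‖ ^ 2 ∧
      1 / (2 * (E z) ^ 3) *
          (E z * (Exx z + Eyy z) - ((Ex z) ^ 2 + (Ey z) ^ 2)) =
        2 * ‖deriv (deriv g) z‖ ^ 2 / (E z) ^ 3 := by
  intro z hz
  have hga : AnalyticOnNhd ℂ g U := hg.analyticOnNhd hU
  have hF : AnalyticOnNhd ℂ (deriv g) U := hga.deriv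
  have hF' : AnalyticOnNhd ℂ (deriv (deriv g)) U := hF.deriv
  have hd1 : ∀ w ∈ U, HasDerivAt (deriv g) (deriv (deriv g) w) w := fun w hw =>
    ((hF w hw).differentiableAt).hasDerivAt
  have hd2 : HasDerivAt (deriv (deriv g)) (deriv (deriv (deriv g)) z) z :=
    ((hF' z hz).differentiableAt).hasDerivAt
  have hEeq : E = fun w => 1 + ‖deriv g w‖ ^ 2 := funext hE
  have hExU : ∀ w ∈ U, Ex w
      = 2 * ((starRingEnd ℂ) (deriv g w) * (deriv (deriv g) w)).re := by
    intro w hw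
    rw [hEx, hEeq, aux2 (hd1 w hw) 1, mul_one]
  have hEyU : ∀ w ∈ U, Ey w
      = 2 * ((starRingEnd ℂ) (deriv g w) * (deriv (deriv g) w * Complex.I)).re := by
    intro w hw
    rw [hEy, hEeq, aux2 (hd1 w hw) Complex.I]
  set p := deriv g z with hp
  set q := deriv (deriv g) z with hq
  set r := deriv (deriv (deriv g)) z with hr
  have hExx' : Exx z = 2 * ((starRingEnd ℂ) q * q + (starRingEnd ℂ) p * r).re := by
    have hev : Ex =ᶠ[nhds z]
        (fun w => 2 * ((starRingEnd ℂ) (deriv g w) * (deriv (deriv g) w)).re) := by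
      filter_upwards [hU.mem_nhds hz] with w hw using hExU w hw
    rw [hExx, hev.fderiv_eq, aux3 (hd1 z hz) hd2 1]
    simp [mul_one]
    rfl
  have hEyy' : Eyy z = 2 * ((starRingEnd ℂ) (q * Complex.I) * (q * Complex.I)
      + (starRingEnd ℂ) p * (r * Complex.I * Complex.I)).re := by
    have hev : Ey =ᶠ[nhds z]
        (fun w => 2 * ((starRingEnd ℂ) (deriv g w) * (deriv (deriv g) w * Complex.I)).re) := by
      filter_upwards [hU.mem_nhds hz] with w hw using hEyU w hw
    rw [hEyy, hev.fderiv_eq, aux3 (hd1 z hz) (hd2.mul_const Complex.I) Complex.I]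
  have hEx' : Ex z = 2 * ((starRingEnd ℂ) p * q).re := hExU z hz
  have hEy' : Ey z = 2 * ((starRingEnd ℂ) p * (q * Complex.I)).re := hEyU z hz
  have h1 : Exx z + Eyy z = 4 * ‖q‖ ^ 2 := by
    rw [hExx', hEyy', Complex.sq_norm, Complex.normSq_apply]
    simp [Complex.mul_re, Complex.mul_im, Complex.add_re]
    ring
  have h2 : (Ex z) ^ 2 + (Ey z) ^ 2 = 4 * ‖p‖ ^ 2 * ‖q‖ ^ 2 := by
    rw [hEx', hEy', Complex.sq_norm, Complex.sq_norm, Complex.normSq_apply, Complex.normSq_apply]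
    simp [Complex.mul_re, Complex.mul_im]
    ring
  have hEz : E z = 1 + ‖p‖ ^ 2 := hE z
  have h3 : E z * (Exx z + Eyy z) - ((Ex z) ^ 2 + (Ey z) ^ 2) = 4 * ‖q‖ ^ 2 := by
    rw [h1, h2, hEz]; ring
  refine ⟨h1, h2, h3, ?_⟩
  have hEpos : (0:ℝ) < E z := by rw [hEz]; positivity
  rw [h3]
  field_simp
  ring
end

section
/- Let p = (z₀, w₀) ∈ ℂ² and c ∈ ℂ. Suppose f is holomorphic on a neighborhood of p in ℂ², μ is holomorphic on a neighborhood of p, g is holomorphic on a neighborhood of 0 ∈ ℂ with g(0) = 0, and f(z,w) − c = μ(z,w)·[(w − w₀) − g(z − z₀)] holds on a neighborhood of p, with μ(p) ≠ 0. Then f_z(p) = −μ(p)·g'(0), f_w(p) = μ(p), and Δ_f(p) = μ(p)³·g''(0). -/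
/-- Partial derivative `∂f/∂z` of a function of two complex variables. -/
noncomputable def pz (f : ℂ × ℂ → ℂ) (q : ℂ × ℂ) : ℂ := fderiv ℂ f q (1, 0)

/-- Partial derivative `∂f/∂w` of a function of two complex variables. -/
noncomputable def pw (f : ℂ × ℂ → ℂ) (q : ℂ × ℂ) : ℂ := fderiv ℂ f q (0, 1)

/-- `Δ_f = 2 f_z f_w f_zw − f_zz f_w² − f_z² f_ww`, the bordered-Hessian
determinant of `f` with last diagonal entry `0`. -/
noncomputable def Delta (f : ℂ × ℂ → ℂ) (q : ℂ × ℂ) : ℂ :=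
  2 * pz f q * pw f q * pw (pz f) q
    - pz (pz f) q * (pw f q) ^ 2 - (pz f q) ^ 2 * pw (pw f) q

/-- Weak product rule: if `h` is differentiable at `p` with `h p = 0` and `M` is
merely continuous at `p`, then `h * M` is differentiable at `p` with derivative
`M p • Dh`. -/
lemma weak_mul {h M : ℂ × ℂ → ℂ} {p : ℂ × ℂ} {Dh : ℂ × ℂ →L[ℂ] ℂ}
    (hh : HasFDerivAt h Dh p) (hp0 : h p = 0) (hM : ContinuousAt M p) :
    HasFDerivAt (fun q => h q * M q) (M p • Dh) p := by
  rw [hasFDerivAt_iff_isLittleO]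
  have h1 : (fun q => h q * (M q - M p)) =o[nhds p] fun q => q - p := by
    have hO : (fun q => h q) =O[nhds p] fun q : ℂ × ℂ => ‖q - p‖ := by
      have := hh.isBigO_sub
      simpa [hp0] using this.norm_right
    have ho : (fun q : ℂ × ℂ => M q - M p) =o[nhds p] (fun _ => (1 : ℝ)) := by
      rw [Asymptotics.isLittleO_one_iff]
      simpa using (hM.tendsto.sub_const (M p))
    have := hO.mul_isLittleO ho
    simp only [mul_one] at this
    exact this.of_norm_right
  have h2 : (fun q => M p * (h q - h p - Dh (q - p))) =o[nhds p] fun q : ℂ × ℂ => q - p :=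
    hh.isLittleO.const_mul_left _
  refine (h1.add h2).congr' (Filter.Eventually.of_forall fun q => ?_) (by rfl)
  simp only [hp0, ContinuousLinearMap.smul_apply, smul_eq_mul, mul_zero, sub_zero]
  ring

/-- Continuity at `p` of the first partial derivative of a differentiable
function of two complex variables. -/
lemma contAt_pz {ν : ℂ × ℂ → ℂ} {V : Set (ℂ × ℂ)} (hV : IsOpen V)
    (hν : DifferentiableOn ℂ ν V) {p : ℂ × ℂ} (hpV : p ∈ V) :
    ContinuousAt (fun q => fderiv ℂ ν q ((1 : ℂ), (0 : ℂ))) p := by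
  obtain ⟨ε, εpos, hball⟩ := Metric.isOpen_iff.1 hV p hpV
  set r := ε / 4 with hr_def
  have hr : 0 < r := by positivity
  have hsub : Metric.closedBall p (3 * r) ⊆ V := by
    intro x hx
    exact hball (lt_of_le_of_lt (Metric.mem_closedBall.1 hx) (by rw [hr_def]; linarith))
  have hrV : Metric.ball p r ⊆ V := fun x hx =>
    hsub (Metric.mem_closedBall.2 (le_of_lt (lt_of_lt_of_le hx (by linarith))))
  -- slices are differentiable
  have hslice : ∀ w ∈ Metric.closedBall p.2 (3 * r),
      DifferentiableOn ℂ (fun ζ => ν (ζ, w)) (Metric.ball p.1 (3 * r)) := by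
    intro w hw
    apply DifferentiableOn.comp hν
      ((differentiable_id.prodMk (differentiable_const w)).differentiableOn)
    intro ζ hζ
    apply hsub
    rw [Metric.mem_closedBall, Prod.dist_eq]
    exact max_le (le_of_lt (Metric.mem_ball.1 hζ)) (Metric.mem_closedBall.1 hw)
  have hp2mem : p.2 ∈ Metric.closedBall p.2 (3 * r) :=
    Metric.mem_closedBall_self (by positivity)
  -- representation of the partial derivative via slices
  have hrep : ∀ q ∈ V, fderiv ℂ ν q ((1 : ℂ), (0 : ℂ)) = deriv (fun ζ => ν (ζ, q.2)) q.1 := by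
    intro q hq
    have h1 : HasFDerivAt ν (fderiv ℂ ν q) q :=
      (hν.differentiableAt (hV.mem_nhds hq)).hasFDerivAt
    have h2 : HasDerivAt (fun ζ : ℂ => (ζ, q.2)) ((1 : ℂ), (0 : ℂ)) q.1 :=
      (hasDerivAt_id q.1).prodMk (hasDerivAt_const q.1 q.2)
    have h3 := h1.comp_hasDerivAt q.1 (by simpa using h2)
    exact (h3.deriv).symm
  -- continuity of the slice derivative at the base point
  have hψ : ContinuousAt (deriv (fun ζ => ν (ζ, p.2))) p.1 := by
    have hana : AnalyticOnNhd ℂ (fun ζ => ν (ζ, p.2)) (Metric.ball p.1 (3 * r)) :=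
      (hslice p.2 hp2mem).analyticOnNhd Metric.isOpen_ball
    exact ((hana.deriv) p.1 (Metric.mem_ball_self (by positivity))).continuousAt
  -- the difference term tends to zero
  have hD1 : Filter.Tendsto (fun q : ℂ × ℂ => deriv (fun ζ => ν (ζ, q.2) - ν (ζ, p.2)) q.1)
      (nhds p) (nhds 0) := by
    rw [Metric.tendsto_nhds]
    intro ε' hε'
    obtain ⟨δ, δpos, hδ⟩ := Metric.uniformContinuousOn_iff.1
      ((isCompact_closedBall p (3 * r)).uniformContinuousOn_of_continuous
        (hν.continuousOn.mono hsub)) (ε' * r / 2) (by positivity)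
    filter_upwards [Metric.ball_mem_nhds p (lt_min δpos hr)] with q hq
    have hq' := Metric.mem_ball.1 hq
    have hz : dist q.1 p.1 < r := by
      have : dist q.1 p.1 ≤ dist q p := by rw [Prod.dist_eq]; exact le_max_left _ _
      exact lt_of_le_of_lt this (lt_of_lt_of_le hq' (min_le_right _ _))
    have hwd : dist q.2 p.2 < δ := by
      have : dist q.2 p.2 ≤ dist q p := by rw [Prod.dist_eq]; exact le_max_right _ _
      exact lt_of_le_of_lt this (lt_of_lt_of_le hq' (min_le_left _ _))
    have hwr : dist q.2 p.2 < r := by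
      have : dist q.2 p.2 ≤ dist q p := by rw [Prod.dist_eq]; exact le_max_right _ _
      exact lt_of_le_of_lt this (lt_of_lt_of_le hq' (min_le_right _ _))
    have hwmem : q.2 ∈ Metric.closedBall p.2 (3 * r) :=
      Metric.mem_closedBall.2 (le_trans hwr.le (by linarith))
    have hφ : DifferentiableOn ℂ (fun ζ => ν (ζ, q.2) - ν (ζ, p.2))
        (Metric.ball p.1 (3 * r)) := (hslice q.2 hwmem).sub (hslice p.2 hp2mem)
    have hcb : Metric.closedBall q.1 r ⊆ Metric.ball p.1 (3 * r) := by
      intro ζ hζ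
      rw [Metric.mem_ball]
      calc dist ζ p.1 ≤ dist ζ q.1 + dist q.1 p.1 := dist_triangle _ _ _
        _ < r + r := add_lt_add_of_le_of_lt (Metric.mem_closedBall.1 hζ) hz
        _ < 3 * r := by linarith
    rw [dist_zero_right, ← Complex.cderiv_eq_deriv Metric.isOpen_ball hφ hr hcb]
    have hb : ∀ ζ ∈ Metric.sphere q.1 r, ‖ν (ζ, q.2) - ν (ζ, p.2)‖ ≤ ε' * r / 2 := by
      intro ζ hζ
      have hζd : dist ζ p.1 ≤ 3 * r := by
        calc dist ζ p.1 ≤ dist ζ q.1 + dist q.1 p.1 := dist_triangle _ _ _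
          _ ≤ r + r := add_le_add (le_of_eq (Metric.mem_sphere.1 hζ)) hz.le
          _ ≤ 3 * r := by linarith
      have h1 : (ζ, q.2) ∈ Metric.closedBall p (3 * r) := by
        rw [Metric.mem_closedBall, Prod.dist_eq]
        exact max_le hζd (Metric.mem_closedBall.1 hwmem)
      have h2 : (ζ, p.2) ∈ Metric.closedBall p (3 * r) := by
        rw [Metric.mem_closedBall, Prod.dist_eq]
        exact max_le hζd (by simp; positivity)
      have h3 : dist ((ζ, q.2) : ℂ × ℂ) (ζ, p.2) < δ := by
        rw [Prod.dist_eq, dist_self, max_eq_right dist_nonneg]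
        exact hwd
      have := hδ _ h1 _ h2 h3
      rw [dist_eq_norm] at this
      exact this.le
    calc ‖Complex.cderiv r (fun ζ => ν (ζ, q.2) - ν (ζ, p.2)) q.1‖
        ≤ ε' * r / 2 / r := Complex.norm_cderiv_le hr hb
      _ = ε' / 2 := by field_simp
      _ < ε' := by linarith
  -- combine
  have heqn : (fun q => fderiv ℂ ν q ((1 : ℂ), (0 : ℂ))) =ᶠ[nhds p]
      fun q => deriv (fun ζ => ν (ζ, q.2) - ν (ζ, p.2)) q.1
        + deriv (fun ζ => ν (ζ, p.2)) q.1 := by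
    filter_upwards [Metric.ball_mem_nhds p hr] with q hq
    have hqV : q ∈ V := hrV hq
    have hq1 : q.1 ∈ Metric.ball p.1 (3 * r) := by
      rw [Metric.mem_ball]
      have : dist q.1 p.1 ≤ dist q p := by rw [Prod.dist_eq]; exact le_max_left _ _
      exact lt_of_le_of_lt this (lt_of_lt_of_le (Metric.mem_ball.1 hq) (by linarith))
    have hwmem : q.2 ∈ Metric.closedBall p.2 (3 * r) := by
      rw [Metric.mem_closedBall]
      have : dist q.2 p.2 ≤ dist q p := by rw [Prod.dist_eq]; exact le_max_right _ _
      exact le_trans this (le_trans (Metric.mem_ball.1 hq).le (by linarith))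
    have hu : DifferentiableAt ℂ (fun ζ => ν (ζ, q.2)) q.1 :=
      ((hslice q.2 hwmem) q.1 hq1).differentiableAt (Metric.isOpen_ball.mem_nhds hq1)
    have hv : DifferentiableAt ℂ (fun ζ => ν (ζ, p.2)) q.1 :=
      ((hslice p.2 hp2mem) q.1 hq1).differentiableAt (Metric.isOpen_ball.mem_nhds hq1)
    rw [hrep q hqV, deriv_fun_sub hu hv]
    ring
  have hlim : Filter.Tendsto
      (fun q : ℂ × ℂ => deriv (fun ζ => ν (ζ, q.2) - ν (ζ, p.2)) q.1
        + deriv (fun ζ => ν (ζ, p.2)) q.1) (nhds p)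
      (nhds (0 + deriv (fun ζ => ν (ζ, p.2)) p.1)) :=
    hD1.add (hψ.comp (continuous_fst.continuousAt)).tendsto
  have hval : fderiv ℂ ν p ((1 : ℂ), (0 : ℂ))
      = 0 + deriv (fun ζ => ν (ζ, p.2)) p.1 := by rw [hrep p hpV]; ring
  rw [ContinuousAt, hval]
  exact hlim.congr' heqn.symm

/-- Continuity at `p` of the second partial derivative. -/
lemma contAt_pw {ν : ℂ × ℂ → ℂ} {V : Set (ℂ × ℂ)} (hV : IsOpen V)
    (hν : DifferentiableOn ℂ ν V) {p : ℂ × ℂ} (hpV : p ∈ V) :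
    ContinuousAt (fun q => fderiv ℂ ν q ((0 : ℂ), (1 : ℂ))) p := by
  have hV' : IsOpen (Prod.swap ⁻¹' V : Set (ℂ × ℂ)) := hV.preimage continuous_swap
  have hν' : DifferentiableOn ℂ (fun q : ℂ × ℂ => ν (q.2, q.1)) (Prod.swap ⁻¹' V) := by
    apply DifferentiableOn.comp hν
      ((differentiable_snd.prodMk differentiable_fst).differentiableOn)
    intro q hq
    exact hq
  have hp' : (p.2, p.1) ∈ (Prod.swap ⁻¹' V : Set (ℂ × ℂ)) := by simpa using hpV
  have hc := contAt_pz hV' hν' hp'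
  have key : ∀ q ∈ V, fderiv ℂ (fun q : ℂ × ℂ => ν (q.2, q.1)) (q.2, q.1) ((1 : ℂ), (0 : ℂ))
      = fderiv ℂ ν q ((0 : ℂ), (1 : ℂ)) := by
    intro q hq
    have h1 : HasFDerivAt ν (fderiv ℂ ν q) q :=
      (hν.differentiableAt (hV.mem_nhds hq)).hasFDerivAt
    have hsw : HasFDerivAt (fun x : ℂ × ℂ => ((x.2, x.1) : ℂ × ℂ))
        ((ContinuousLinearMap.snd ℂ ℂ ℂ).prod (ContinuousLinearMap.fst ℂ ℂ ℂ)) (q.2, q.1) :=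
      hasFDerivAt_snd.prodMk hasFDerivAt_fst
    have h2 : HasFDerivAt (fun x : ℂ × ℂ => ν (x.2, x.1))
        ((fderiv ℂ ν q).comp ((ContinuousLinearMap.snd ℂ ℂ ℂ).prod
          (ContinuousLinearMap.fst ℂ ℂ ℂ))) (q.2, q.1) :=
      h1.comp (q.2, q.1) hsw
    rw [h2.fderiv]
    rfl
  have hcomp : ContinuousAt
      ((fun q : ℂ × ℂ => fderiv ℂ (fun x : ℂ × ℂ => ν (x.2, x.1)) q ((1:ℂ), (0:ℂ)))
        ∘ (fun q : ℂ × ℂ => (q.2, q.1))) p :=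
    ContinuousAt.comp (f := fun q : ℂ × ℂ => (q.2, q.1)) hc
      ((continuous_snd.prodMk continuous_fst).continuousAt)
  refine hcomp.congr ?_
  filter_upwards [hV.mem_nhds hpV] with q hq
  exact (key q hq)

/-- if `f(z,w) − c = μ(z,w)·[(w − w₀) − g(z − z₀)]` near
`p = (z₀,w₀)`, with `f, μ` holomorphic near `p`, `g` holomorphic near `0`,
`g(0) = 0`, `μ(p) ≠ 0`, then `f_z(p) = −μ(p) g'(0)`, `f_w(p) = μ(p)` and
`Δ_f(p) = μ(p)³ g''(0)`. -/
theorem stmt2 (p : ℂ × ℂ) (c : ℂ) (f μ : ℂ × ℂ → ℂ) (g : ℂ → ℂ)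
    (V : Set (ℂ × ℂ)) (hV : IsOpen V) (hpV : p ∈ V)
    (hf : DifferentiableOn ℂ f V) (hμ : DifferentiableOn ℂ μ V)
    (W : Set ℂ) (hW : IsOpen W) (h0W : (0 : ℂ) ∈ W)
    (hg : DifferentiableOn ℂ g W) (hg0 : g 0 = 0)
    (hVW : ∀ q ∈ V, q.1 - p.1 ∈ W)
    (heq : ∀ q ∈ V, f q - c = μ q * ((q.2 - p.2) - g (q.1 - p.1)))
    (hμp : μ p ≠ 0) :
    pz f p = -(μ p) * deriv g 0 ∧
    pw f p = μ p ∧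
    Delta f p = (μ p) ^ 3 * deriv (deriv g) 0 := by
  have hVn : V ∈ nhds p := hV.mem_nhds hpV
  have hgW : AnalyticOnNhd ℂ g W := hg.analyticOnNhd hW
  set h : ℂ × ℂ → ℂ := fun q => (q.2 - p.2) - g (q.1 - p.1) with hh_def
  have hp0 : h p = 0 := by simp [hh_def, hg0]
  -- derivative of h on V
  have hhd : ∀ q ∈ V, HasFDerivAt h
      (ContinuousLinearMap.snd ℂ ℂ ℂ
        - deriv g (q.1 - p.1) • ContinuousLinearMap.fst ℂ ℂ ℂ) q := by
    intro q hq
    have h1 : HasFDerivAt (fun q : ℂ × ℂ => q.1 - p.1)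
        (ContinuousLinearMap.fst ℂ ℂ ℂ) q := hasFDerivAt_fst.sub_const p.1
    have h2 : HasDerivAt g (deriv g (q.1 - p.1)) (q.1 - p.1) :=
      (hg.differentiableAt (hW.mem_nhds (hVW q hq))).hasDerivAt
    exact (hasFDerivAt_snd.sub_const p.2).sub (h2.comp_hasFDerivAt q h1)
  have hμd : ∀ q ∈ V, HasFDerivAt μ (fderiv ℂ μ q) q := fun q hq =>
    (hμ.differentiableAt (hV.mem_nhds hq)).hasFDerivAt
  -- f = c + μ * h on a neighborhood of each q ∈ V
  have hfF : ∀ q ∈ V, f =ᶠ[nhds q] fun x => c + μ x * h x := by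
    intro q hq
    filter_upwards [hV.mem_nhds hq] with x hx
    have := heq x hx
    simp only [hh_def]
    linear_combination this
  -- fderiv of f on V
  have hfd : ∀ q ∈ V, fderiv ℂ f q
      = μ q • (ContinuousLinearMap.snd ℂ ℂ ℂ
          - deriv g (q.1 - p.1) • ContinuousLinearMap.fst ℂ ℂ ℂ)
        + h q • fderiv ℂ μ q := by
    intro q hq
    have hF : HasFDerivAt (fun x => c + μ x * h x)
        (μ q • (ContinuousLinearMap.snd ℂ ℂ ℂ
          - deriv g (q.1 - p.1) • ContinuousLinearMap.fst ℂ ℂ ℂ)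
        + h q • fderiv ℂ μ q) q := ((hμd q hq).mul (hhd q hq)).const_add c
    rw [(hfF q hq).fderiv_eq, hF.fderiv]
  -- first partials of f on V
  have hpz : ∀ q ∈ V, pz f q
      = h q * fderiv ℂ μ q (1, 0) - μ q * deriv g (q.1 - p.1) := by
    intro q hq
    simp only [pz, hfd q hq, ContinuousLinearMap.add_apply,
      ContinuousLinearMap.smul_apply, ContinuousLinearMap.sub_apply,
      ContinuousLinearMap.coe_snd', ContinuousLinearMap.coe_fst',
      smul_eq_mul]
    ring
  have hpw : ∀ q ∈ V, pw f q = h q * fderiv ℂ μ q (0, 1) + μ q := by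
    intro q hq
    simp only [pw, hfd q hq, ContinuousLinearMap.add_apply,
      ContinuousLinearMap.smul_apply, ContinuousLinearMap.sub_apply,
      ContinuousLinearMap.coe_snd', ContinuousLinearMap.coe_fst',
      smul_eq_mul]
    ring
  have hpzp : pz f p = -(μ p) * deriv g 0 := by
    rw [hpz p hpV, hp0]
    simp
  have hpwp : pw f p = μ p := by
    rw [hpw p hpV, hp0]
    simp
  refine ⟨hpzp, hpwp, ?_⟩
  -- continuity of partial derivatives of μ
  have hMzc : ContinuousAt (fun q => fderiv ℂ μ q ((1 : ℂ), (0 : ℂ))) p :=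
    contAt_pz hV hμ hpV
  have hMwc : ContinuousAt (fun q => fderiv ℂ μ q ((0 : ℂ), (1 : ℂ))) p :=
    contAt_pw hV hμ hpV
  -- derivative of h at p
  have hhp : HasFDerivAt h
      (ContinuousLinearMap.snd ℂ ℂ ℂ
        - deriv g 0 • ContinuousLinearMap.fst ℂ ℂ ℂ) p := by
    have := hhd p hpV; simpa using this
  -- derivative of G := fun q => deriv g (q.1 - p.1) at p
  have hg'a : AnalyticAt ℂ (deriv g) 0 := hgW.deriv 0 h0W
  have hg'd : HasDerivAt (deriv g) (deriv (deriv g) 0) 0 :=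
    hg'a.differentiableAt.hasDerivAt
  have hGp : HasFDerivAt (fun q : ℂ × ℂ => deriv g (q.1 - p.1))
      (deriv (deriv g) 0 • ContinuousLinearMap.fst ℂ ℂ ℂ) p := by
    have h1 : HasFDerivAt (fun q : ℂ × ℂ => q.1 - p.1)
        (ContinuousLinearMap.fst ℂ ℂ ℂ) p := hasFDerivAt_fst.sub_const p.1
    have h2 : HasDerivAt g (deriv g 0) 0 := by
      have := (hg.differentiableAt (hW.mem_nhds h0W)).hasDerivAt
      exact this
    have h3 : HasDerivAt (deriv g) (deriv (deriv g) 0) (p.1 - p.1) := by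
      simpa using hg'd
    have := h3.comp_hasFDerivAt p h1
    exact this
  -- the eventual formulas for pz f and pw f
  have hepz : pz f =ᶠ[nhds p]
      fun q => h q * fderiv ℂ μ q (1, 0) - μ q * deriv g (q.1 - p.1) := by
    filter_upwards [hVn] with q hq using hpz q hq
  have hepw : pw f =ᶠ[nhds p]
      fun q => h q * fderiv ℂ μ q (0, 1) + μ q := by
    filter_upwards [hVn] with q hq using hpw q hq
  -- derivative of the pz f formula at p
  have hAd : HasFDerivAt
      (fun q => h q * fderiv ℂ μ q (1, 0) - μ q * deriv g (q.1 - p.1))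
      (fderiv ℂ μ p (1, 0) • (ContinuousLinearMap.snd ℂ ℂ ℂ
          - deriv g 0 • ContinuousLinearMap.fst ℂ ℂ ℂ)
       - (μ p • (deriv (deriv g) 0 • ContinuousLinearMap.fst ℂ ℂ ℂ)
        + deriv g (p.1 - p.1) • fderiv ℂ μ p)) p :=
    (weak_mul hhp hp0 hMzc).sub ((hμd p hpV).mul hGp)
  have hBd : HasFDerivAt
      (fun q => h q * fderiv ℂ μ q (0, 1) + μ q)
      (fderiv ℂ μ p (0, 1) • (ContinuousLinearMap.snd ℂ ℂ ℂ
          - deriv g 0 • ContinuousLinearMap.fst ℂ ℂ ℂ)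
       + fderiv ℂ μ p) p :=
    (weak_mul hhp hp0 hMwc).add (hμd p hpV)
  have hfAd : fderiv ℂ (pz f) p = _ := hepz.fderiv_eq.trans hAd.fderiv
  have hfBd : fderiv ℂ (pw f) p = _ := hepw.fderiv_eq.trans hBd.fderiv
  -- second partials at p
  have e1 : pz (pz f) p = -2 * deriv g 0 * fderiv ℂ μ p (1, 0)
      - μ p * deriv (deriv g) 0 := by
    simp only [pz, hfAd, ContinuousLinearMap.add_apply,
      ContinuousLinearMap.sub_apply, ContinuousLinearMap.smul_apply,
      ContinuousLinearMap.coe_snd', ContinuousLinearMap.coe_fst',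
      smul_eq_mul, sub_self]
    ring
  have e2 : pw (pz f) p = fderiv ℂ μ p (1, 0)
      - deriv g 0 * fderiv ℂ μ p (0, 1) := by
    simp only [pz, pw, hfAd, ContinuousLinearMap.add_apply,
      ContinuousLinearMap.sub_apply, ContinuousLinearMap.smul_apply,
      ContinuousLinearMap.coe_snd', ContinuousLinearMap.coe_fst',
      smul_eq_mul, sub_self]
    ring
  have e3 : pw (pw f) p = 2 * fderiv ℂ μ p (0, 1) := by
    simp only [pw, hfBd, ContinuousLinearMap.add_apply,
      ContinuousLinearMap.sub_apply, ContinuousLinearMap.smul_apply,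
      ContinuousLinearMap.coe_snd', ContinuousLinearMap.coe_fst',
      smul_eq_mul, sub_self]
    ring
  rw [Delta, hpzp, hpwp, e1, e2, e3]
  ring
end

section
/- Let p = (z₀, w₀) ∈ ℂ² and c ∈ ℂ. Suppose f is holomorphic on a neighborhood of p in ℂ², μ is holomorphic on a neighborhood of p, g is holomorphic on a neighborhood of 0 ∈ ℂ with g(0) = 0, and f(z,w) − c = μ(z,w)·[(w − w₀) − g(z − z₀)] holds on a neighborhood of p, with μ(p) ≠ 0. Then 2·|Δ_f(p)|² / (|f_z(p)|² + |f_w(p)|²)³ = 2·|g''(0)|² / (1 + |g'(0)|²)³. (Thus the curvature expression K = 2|Δ_f|²/(|f_z|²+|f_w|²)³ of the level curve f = c at a regular point agrees with the curvature of its local graph representation w = w₀ + g(z − z₀).) -/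
open Metric Filter Topology

/-- slice derivative equals `pz`. -/
lemma pz_eq_slice_deriv {μ : ℂ × ℂ → ℂ} {q : ℂ × ℂ} (h : DifferentiableAt ℂ μ q) :
    deriv (fun z => μ (z, q.2)) q.1 = pz μ q := by
  have h1 : HasDerivAt (fun z : ℂ => (z, q.2)) ((1 : ℂ), (0 : ℂ)) q.1 := by
    have := (hasDerivAt_id q.1).prodMk (hasDerivAt_const q.1 q.2)
    simpa using this
  have := h.hasFDerivAt.comp_hasDerivAt q.1 h1
  exact this.deriv

lemma cont_pz {μ : ℂ × ℂ → ℂ} {V : Set (ℂ × ℂ)} (hV : IsOpen V)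
    (hμ : DifferentiableOn ℂ μ V) {p : ℂ × ℂ} (hp : p ∈ V) :
    ContinuousAt (pz μ) p := by
  obtain ⟨r, hr, hball⟩ := Metric.isOpen_iff.1 hV p hp
  set r' := r / 2 with hr'def
  have hr' : 0 < r' := by positivity
  have hr'r : r' < r := by simp [hr'def]; linarith
  set F : ℂ → ℂ → ℂ := fun w z => μ (z, w) with hF
  have hmem : ∀ z w : ℂ, z ∈ closedBall p.1 r' → w ∈ closedBall p.2 r' → (z, w) ∈ V := by
    intro z w hz hw
    apply hball
    rw [← ball_prod_same]
    exact ⟨lt_of_le_of_lt hz hr'r, lt_of_le_of_lt hw hr'r⟩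
  -- uniform continuity on compact product (in (w, z) order, matching ↿F)
  have hK : IsCompact (closedBall p.2 r' ×ˢ closedBall p.1 r') :=
    (isCompact_closedBall _ _).prod (isCompact_closedBall _ _)
  have hcont : ContinuousOn (↿F) (closedBall p.2 r' ×ˢ closedBall p.1 r') := by
    have : ContinuousOn μ V := hμ.continuousOn
    have hsw : ContinuousOn (fun x : ℂ × ℂ => μ (x.2, x.1)) (closedBall p.2 r' ×ˢ closedBall p.1 r') := by
      apply this.comp (Continuous.continuousOn (by fun_prop))
      intro x hx
      exact hmem x.2 x.1 hx.2 hx.1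
    exact hsw
  have hUC : UniformContinuousOn (↿F) (closedBall p.2 r' ×ˢ closedBall p.1 r') :=
    IsCompact.uniformContinuousOn_of_continuous hK hcont
  have hTU : TendstoUniformlyOn F (F p.2) (𝓝[closedBall p.2 r'] p.2) (closedBall p.1 r') :=
    hUC.tendstoUniformlyOn (mem_closedBall_self hr'.le)
  rw [nhdsWithin_eq_nhds.2 (closedBall_mem_nhds _ hr')] at hTU
  have hTLU : TendstoLocallyUniformlyOn F (F p.2) (𝓝 p.2) (ball p.1 r') :=
    hTU.tendstoLocallyUniformlyOn.mono ball_subset_closedBall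
  have hFd : ∀ᶠ w in 𝓝 p.2, DifferentiableOn ℂ (F w) (ball p.1 r') := by
    filter_upwards [ball_mem_nhds p.2 hr'] with w hw z hz
    have hzV : (z, w) ∈ V := hmem z w (ball_subset_closedBall hz) (ball_subset_closedBall hw)
    have : DifferentiableAt ℂ (F w) z := by
      have h1 : DifferentiableAt ℂ μ (z, w) := hμ.differentiableAt (hV.mem_nhds hzV)
      exact h1.comp z (by fun_prop)
    exact this.differentiableWithinAt
  have hTLU2 : TendstoLocallyUniformlyOn (deriv ∘ F) (deriv (F p.2)) (𝓝 p.2) (ball p.1 r') :=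
    hTLU.deriv hFd isOpen_ball
  -- continuity of deriv (F p.2) at p.1
  have hFp2 : DifferentiableOn ℂ (F p.2) (ball p.1 r') := by
    intro z hz
    have hzV : (z, p.2) ∈ V := hmem z p.2 (ball_subset_closedBall hz) (mem_closedBall_self hr'.le)
    have h1 : DifferentiableAt ℂ μ (z, p.2) := hμ.differentiableAt (hV.mem_nhds hzV)
    exact (h1.comp z (by fun_prop)).differentiableWithinAt
  have hderivCont : ContinuousAt (deriv (F p.2)) p.1 := by
    have := (hFp2.analyticOnNhd isOpen_ball).deriv
    exact ((this p.1 (mem_ball_self hr')).differentiableAt).continuousAt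
  -- joint continuity of D at p
  have hD : ContinuousAt (fun q : ℂ × ℂ => deriv (F q.2) q.1) p := by
    rw [Metric.continuousAt_iff']
    intro ε hε
    obtain ⟨t, ht, hev⟩ :=
      (Metric.tendstoLocallyUniformlyOn_iff.1 hTLU2) (ε / 2) (by positivity) p.1
        (mem_ball_self hr')
    rw [nhdsWithin_eq_nhds.2 (isOpen_ball.mem_nhds (mem_ball_self hr'))] at ht
    have h1 : ∀ᶠ z in 𝓝 p.1, dist (deriv (F p.2) z) (deriv (F p.2) p.1) < ε / 2 :=
      hderivCont (Metric.ball_mem_nhds _ (by positivity : (0:ℝ) < ε / 2))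
    have key : ∀ᶠ q : ℂ × ℂ in 𝓝 p, dist (deriv (F q.2) q.1) (deriv (F p.2) p.1) < ε := by
      rw [← Prod.mk.eta (p := p), nhds_prod_eq]
      filter_upwards [Filter.prod_mem_prod (Filter.inter_mem ht h1) hev] with q hq
      obtain ⟨⟨hqt, hq1⟩, hq2⟩ := hq
      calc dist (deriv (F q.2) q.1) (deriv (F p.2) p.1)
          ≤ dist (deriv (F q.2) q.1) (deriv (F p.2) q.1)
            + dist (deriv (F p.2) q.1) (deriv (F p.2) p.1) := dist_triangle _ _ _
        _ < ε / 2 + ε / 2 := by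
            apply add_lt_add _ hq1
            rw [dist_comm]; exact hq2 q.1 hqt
        _ = ε := by ring
    exact key
  -- pz μ agrees with D near p
  have heq : ∀ᶠ q : ℂ × ℂ in 𝓝 p, deriv (F q.2) q.1 = pz μ q := by
    filter_upwards [hV.mem_nhds hp] with q hq
    exact pz_eq_slice_deriv (hμ.differentiableAt (hV.mem_nhds hq))
  have := hD.congr (heq.mono fun q h => h)
  simpa [heq.self_of_nhds] using this

lemma pz_of_hasFDerivAt {f : ℂ × ℂ → ℂ} {L : ℂ × ℂ →L[ℂ] ℂ} {q : ℂ × ℂ}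
    (hL : HasFDerivAt f L q) : pz f q = L (1, 0) := by rw [pz, hL.fderiv]

lemma pw_of_hasFDerivAt {f : ℂ × ℂ → ℂ} {L : ℂ × ℂ →L[ℂ] ℂ} {q : ℂ × ℂ}
    (hL : HasFDerivAt f L q) : pw f q = L (0, 1) := by rw [pw, hL.fderiv]

lemma cont_pw_aux {μ : ℂ × ℂ → ℂ} {V : Set (ℂ × ℂ)} (hV : IsOpen V)
    (hμ : DifferentiableOn ℂ μ V) {q : ℂ × ℂ} (hq : q ∈ V) :
    pz (fun x : ℂ × ℂ => μ (x.2, x.1)) (q.2, q.1) = pw μ q := by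
  have hd : DifferentiableAt ℂ μ q := hμ.differentiableAt (hV.mem_nhds hq)
  have hsw : HasFDerivAt (fun x : ℂ × ℂ => (x.2, x.1))
      ((ContinuousLinearEquiv.prodComm ℂ ℂ ℂ : (ℂ × ℂ) ≃L[ℂ] ℂ × ℂ) :
        ℂ × ℂ →L[ℂ] ℂ × ℂ) (q.2, q.1) := by
    exact ((ContinuousLinearEquiv.prodComm ℂ ℂ ℂ).hasFDerivAt (x := (q.2, q.1)))
  have hcomp : HasFDerivAt (fun x : ℂ × ℂ => μ (x.2, x.1))
      ((fderiv ℂ μ q).comp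
        ((ContinuousLinearEquiv.prodComm ℂ ℂ ℂ : (ℂ × ℂ) ≃L[ℂ] ℂ × ℂ) :
          ℂ × ℂ →L[ℂ] ℂ × ℂ)) (q.2, q.1) := by
    have := hd.hasFDerivAt.comp (q.2, q.1) hsw
    exact this
  rw [pz_of_hasFDerivAt hcomp]
  simp only [pw]
  rfl

lemma cont_pw {μ : ℂ × ℂ → ℂ} {V : Set (ℂ × ℂ)} (hV : IsOpen V)
    (hμ : DifferentiableOn ℂ μ V) {p : ℂ × ℂ} (hp : p ∈ V)
    (hcpz : ∀ (ν : ℂ × ℂ → ℂ) (V' : Set (ℂ × ℂ)), IsOpen V' → DifferentiableOn ℂ ν V' →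
      ∀ q ∈ V', ContinuousAt (pz ν) q) :
    ContinuousAt (pw μ) p := by
  set ν : ℂ × ℂ → ℂ := fun x => μ (x.2, x.1) with hνdef
  set V' : Set (ℂ × ℂ) := Prod.swap ⁻¹' V with hV'def
  have hV' : IsOpen V' := hV.preimage continuous_swap
  have hν : DifferentiableOn ℂ ν V' := by
    intro x hx
    have hxV : (x.2, x.1) ∈ V := hx
    have : DifferentiableAt ℂ μ (x.2, x.1) := hμ.differentiableAt (hV.mem_nhds hxV)
    exact (this.comp x (by fun_prop)).differentiableWithinAt
  have hp' : (p.2, p.1) ∈ V' := by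
    show Prod.swap (p.2, p.1) ∈ V
    simpa using hp
  have h1 : ContinuousAt (pz ν) (p.2, p.1) := hcpz ν V' hV' hν _ hp'
  have h2 : ContinuousAt (fun q : ℂ × ℂ => pz ν (q.2, q.1)) p := by
    have hsw : ContinuousAt (fun q : ℂ × ℂ => (q.2, q.1)) p := by fun_prop
    exact ContinuousAt.comp (g := pz ν) (x := p) h1 hsw
  apply h2.congr
  filter_upwards [hV.mem_nhds hp] with q hq
  exact cont_pw_aux hV hμ hq

lemma hasFDerivAt_mul_of_vanish {A h : ℂ × ℂ → ℂ} {D : ℂ × ℂ →L[ℂ] ℂ} {p : ℂ × ℂ}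
    (hA : ContinuousAt A p) (hh : HasFDerivAt h D p) (h0 : h p = 0) :
    HasFDerivAt (fun q => A q * h q) (A p • D) p := by
  rw [hasFDerivAt_iff_isLittleO] at hh ⊢
  have hO : (fun q : ℂ × ℂ => A q) =O[𝓝 p] (fun _ => (1 : ℝ)) := hA.isBigO_one ℝ
  have t1 : (fun q => A q * (h q - h p - D (q - p))) =o[𝓝 p] fun q : ℂ × ℂ => q - p := by
    have := hO.mul_isLittleO hh.norm_right
    simp only [one_mul] at this
    exact this.of_norm_right
  have t2 : (fun q => (A q - A p) * D (q - p)) =o[𝓝 p] fun q : ℂ × ℂ => q - p := by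
    have hsmall : (fun q : ℂ × ℂ => A q - A p) =o[𝓝 p] (fun _ => (1 : ℝ)) := by
      rw [Asymptotics.isLittleO_one_iff]
      simpa using hA.sub_const (A p)
    have hDO : (fun q : ℂ × ℂ => D (q - p)) =O[𝓝 p] fun q : ℂ × ℂ => q - p :=
      D.isBigO_comp _ _
    have := hsmall.mul_isBigO hDO.norm_right
    simp only [one_mul] at this
    exact this.of_norm_right
  have := t1.add t2
  apply this.congr_left
  intro q
  simp only [ContinuousLinearMap.smul_apply, smul_eq_mul, h0]
  ring


/-- if `f(z,w) − c = μ(z,w)·[(w − w₀) − g(z − z₀)]` near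
`p = (z₀,w₀)`, with `f, μ` holomorphic near `p`, `g` holomorphic near `0`,
`g(0) = 0`, `μ(p) ≠ 0`, then the curvature expression of the level curve
`f = c` at `p` agrees with that of the graph `w = w₀ + g(z − z₀)`:
`2|Δ_f(p)|²/(|f_z(p)|²+|f_w(p)|²)³ = 2|g''(0)|²/(1+|g'(0)|²)³`. -/
theorem stmt3 (p : ℂ × ℂ) (c : ℂ) (f μ : ℂ × ℂ → ℂ) (g : ℂ → ℂ)
    (V : Set (ℂ × ℂ)) (hV : IsOpen V) (hpV : p ∈ V)
    (hf : DifferentiableOn ℂ f V) (hμ : DifferentiableOn ℂ μ V)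
    (W : Set ℂ) (hW : IsOpen W) (h0W : (0 : ℂ) ∈ W)
    (hg : DifferentiableOn ℂ g W) (hg0 : g 0 = 0)
    (hVW : ∀ q ∈ V, q.1 - p.1 ∈ W)
    (heq : ∀ q ∈ V, f q - c = μ q * ((q.2 - p.2) - g (q.1 - p.1)))
    (hμp : μ p ≠ 0) :
    2 * ‖Delta f p‖ ^ 2
        / (‖pz f p‖ ^ 2 + ‖pw f p‖ ^ 2) ^ 3
      = 2 * ‖deriv (deriv g) 0‖ ^ 2
        / (1 + ‖deriv g 0‖ ^ 2) ^ 3 := by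
  have hgW : AnalyticOnNhd ℂ g W := hg.analyticOnNhd hW
  set a := deriv g 0 with ha
  set b := deriv (deriv g) 0 with hb
  set m := μ p with hm
  set h : ℂ × ℂ → ℂ := fun q => q.2 - p.2 - g (q.1 - p.1) with hhdef
  set fst : ℂ × ℂ →L[ℂ] ℂ := ContinuousLinearMap.fst ℂ ℂ ℂ with hfst
  set snd : ℂ × ℂ →L[ℂ] ℂ := ContinuousLinearMap.snd ℂ ℂ ℂ with hsnd
  have hp0 : p.1 - p.1 = 0 := sub_self _
  have hh0 : h p = 0 := by simp [hhdef, hg0]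
  have hinner : ∀ q : ℂ × ℂ, HasFDerivAt (fun q : ℂ × ℂ => q.1 - p.1) fst q :=
    fun q => (hasFDerivAt_fst).sub_const _
  have hhq : ∀ q ∈ V, HasFDerivAt h (snd - deriv g (q.1 - p.1) • fst) q := by
    intro q hq
    have hgd : HasDerivAt g (deriv g (q.1 - p.1)) (q.1 - p.1) :=
      (hg.differentiableAt (hW.mem_nhds (hVW q hq))).hasDerivAt
    have h2 : HasFDerivAt (fun q : ℂ × ℂ => g (q.1 - p.1))
        (deriv g (q.1 - p.1) • fst) q := hgd.comp_hasFDerivAt q (hinner q)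
    exact ((hasFDerivAt_snd).sub_const p.2).sub h2
  have hμq : ∀ q ∈ V, HasFDerivAt μ (fderiv ℂ μ q) q :=
    fun q hq => (hμ.differentiableAt (hV.mem_nhds hq)).hasFDerivAt
  have hfq : ∀ q ∈ V, HasFDerivAt f
      (μ q • (snd - deriv g (q.1 - p.1) • fst) + h q • fderiv ℂ μ q) q := by
    intro q hq
    have hmul := (hμq q hq).mul' (hhq q hq)
    have hconv : (fderiv ℂ μ q).smulRight (h q) = h q • fderiv ℂ μ q := by
      ext <;> simp [mul_comm]
    have hstep : HasFDerivAt (fun q' => c + μ q' * h q')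
        (μ q • (snd - deriv g (q.1 - p.1) • fst) + h q • fderiv ℂ μ q) q := by
      have := (hasFDerivAt_const c q).add hmul
      simp only [hconv, zero_add, op_smul_eq_smul] at this
      exact this
    apply hstep.congr_of_eventuallyEq
    filter_upwards [hV.mem_nhds hq] with q' hq'
    have := heq q' hq'
    simp only [hhdef]
    linear_combination this
  have hpz : ∀ q ∈ V, pz f q = h q * pz μ q + μ q * (-(deriv g (q.1 - p.1))) := by
    intro q hq
    rw [pz_of_hasFDerivAt (hfq q hq)]
    simp [pz, hfst, hsnd]
    ring
  have hpw : ∀ q ∈ V, pw f q = h q * pw μ q + μ q := by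
    intro q hq
    rw [pw_of_hasFDerivAt (hfq q hq)]
    simp [pw, hfst, hsnd]
    ring
  have hpzp : pz f p = -(m * a) := by
    rw [hpz p hpV, hh0, hp0, ← ha]; ring
  have hpwp : pw f p = m := by
    rw [hpw p hpV, hh0]; ring
  -- second derivatives
  have hcontz : ContinuousAt (pz μ) p := cont_pz hV hμ hpV
  have hcontw : ContinuousAt (pw μ) p :=
    cont_pw hV hμ hpV (fun ν V' hV' hν q hq => cont_pz hV' hν hq)
  have hDh_p : HasFDerivAt h (snd - a • fst) p := by
    have := hhq p hpV
    rwa [hp0, ← ha] at this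
  have termA : HasFDerivAt (fun q => pz μ q * h q) (pz μ p • (snd - a • fst)) p :=
    hasFDerivAt_mul_of_vanish hcontz hDh_p hh0
  have hdg : HasDerivAt (deriv g) b (p.1 - p.1) := by
    rw [hp0]
    exact ((hgW.deriv 0 h0W).differentiableAt).hasDerivAt
  have hG1 : HasFDerivAt (fun q : ℂ × ℂ => -(deriv g (q.1 - p.1))) (-(b • fst)) p :=
    HasFDerivAt.neg (f := fun q : ℂ × ℂ => deriv g (q.1 - p.1)) (hdg.comp_hasFDerivAt_of_eq p (hinner p) rfl)
  have termB := (hμq p hpV).mul' hG1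
  rw [hp0, ← ha, ← hm] at termB
  have heq' : pz f =ᶠ[𝓝 p]
      fun q => pz μ q * h q + μ q * -deriv g (q.1 - p.1) := by
    filter_upwards [hV.mem_nhds hpV] with q hq
    rw [hpz q hq]; ring
  have hpzf := (termA.add termB).congr_of_eventuallyEq heq'
  have e_zz : pz (pz f) p = -(2 * a * pz μ p) - m * b := by
    rw [pz_of_hasFDerivAt hpzf]
    simp [pz, hfst, hsnd]
    ring
  have e_zw : pw (pz f) p = pz μ p - a * pw μ p := by
    rw [pw_of_hasFDerivAt hpzf]
    simp [pz, pw, hfst, hsnd]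
    ring
  have termA' : HasFDerivAt (fun q => pw μ q * h q) (pw μ p • (snd - a • fst)) p :=
    hasFDerivAt_mul_of_vanish hcontw hDh_p hh0
  have heq'' : pw f =ᶠ[𝓝 p] fun q => pw μ q * h q + μ q := by
    filter_upwards [hV.mem_nhds hpV] with q hq
    rw [hpw q hq]; ring
  have hpwf := (termA'.add (hμq p hpV)).congr_of_eventuallyEq heq''
  have e_ww : pw (pw f) p = 2 * pw μ p := by
    rw [pw_of_hasFDerivAt hpwf]
    simp [pw, hfst, hsnd]
    ring
  have hDelta : Delta f p = m ^ 3 * b := by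
    rw [Delta, e_zz, e_zw, e_ww, hpzp, hpwp]; ring
  have hma : ‖m‖ ≠ 0 := by
    simpa using hμp
  rw [hDelta, hpzp, hpwp]
  have h1 : ‖m ^ 3 * b‖ = ‖m‖ ^ 3 * ‖b‖ := by
    simp [norm_mul, norm_pow]
  have h2 : ‖-(m * a)‖ = ‖m‖ * ‖a‖ := by
    simp [norm_mul]
  rw [h1, h2]
  have hden : (0 : ℝ) < 1 + ‖a‖ ^ 2 := by positivity
  field_simp
  ring
end

section
/- Let f be holomorphic on an open set V ⊆ ℂ² and let γ be holomorphic on an open set U ⊆ ℂ. Define F(Z,W) := f(Z + γ(W), W) on the open set of pairs (Z,W) with W ∈ U and (Z + γ(W), W) ∈ V. Then for all such (Z,W): Δ_f(Z + γ(W), W) = Δ_F(Z,W) + γ''(W)·(F_Z(Z,W))³. -/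
open Metric Set Filter Complex Topology

/-- 1D Cauchy estimate away from the boundary. -/
lemma cauchyBound {h : ℂ → ℂ} {a : ℂ} {R r M : ℝ} (hrR : r < R)
    (hd : DifferentiableOn ℂ h (ball a R)) (hM : ∀ x ∈ ball a R, ‖h x‖ ≤ M)
    {z : ℂ} (hz : z ∈ closedBall a r) : ‖deriv h z‖ ≤ M / ((R - r) / 2) := by
  have hr0 : 0 ≤ r := le_trans dist_nonneg (mem_closedBall.1 hz)
  have hρ : 0 < (R - r) / 2 := by linarith
  have hsub : closedBall z ((R - r) / 2) ⊆ ball a R := by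
    intro y hy
    have h1 : dist y a ≤ dist y z + dist z a := dist_triangle _ _ _
    have h2 : dist y z ≤ (R - r) / 2 := mem_closedBall.1 hy
    have h3 : dist z a ≤ r := mem_closedBall.1 hz
    exact mem_ball.2 (by linarith)
  have hsub' : ball z ((R - r) / 2) ⊆ ball a R :=
    (ball_subset_closedBall).trans hsub
  refine norm_deriv_le_of_forall_mem_sphere_norm_le hρ ?_ ?_
  · exact DiffContOnCl.mk (hd.mono hsub') ((hd.continuousOn).mono
      ((closure_ball_subset_closedBall).trans hsub))
  · exact fun y hy => hM y (hsub (sphere_subset_closedBall hy))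

/-- Lipschitz estimate on a closed ball from a derivative bound. -/
lemma lip_aux {h : ℂ → ℂ} {U : Set ℂ} (hU : IsOpen U) (hd : DifferentiableOn ℂ h U)
    {K : ℝ} {c : ℂ} {ρ : ℝ} (hsub : closedBall c ρ ⊆ U)
    (hK : ∀ x ∈ closedBall c ρ, ‖deriv h x‖ ≤ K) :
    ∀ x ∈ closedBall c ρ, ∀ y ∈ closedBall c ρ, ‖h y - h x‖ ≤ K * ‖y - x‖ := by
  intro x hx y hy
  exact Convex.norm_image_sub_le_of_norm_hasDerivWithin_le
    (fun w hw => ((hd.differentiableAt (hU.mem_nhds (hsub hw))).hasDerivAt).hasDerivWithinAt)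
    (fun w hw => hK w hw) (convex_closedBall c ρ) hx hy

/-- Second-order difference quotient estimate. -/
lemma dq_est {h : ℂ → ℂ} {a : ℂ} {R K : ℝ}
    (hd : DifferentiableOn ℂ h (ball a R))
    (hK : ∀ x ∈ ball a R, ‖deriv (deriv h) x‖ ≤ K)
    {z t : ℂ} (ht : t ≠ 0) (hsub : closedBall z ‖t‖ ⊆ ball a R) :
    ‖(h (z + t) - h z) / t - deriv h z‖ ≤ K * ‖t‖ := by
  have hz : z ∈ ball a R := hsub (mem_closedBall_self (norm_nonneg t))
  have hd' : DifferentiableOn ℂ (deriv h) (ball a R) :=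
    ((hd.analyticOnNhd isOpen_ball).deriv).differentiableOn
  -- Lipschitz bound on deriv h
  have hlip : ∀ y ∈ closedBall z ‖t‖, ‖deriv h y - deriv h z‖ ≤ K * ‖y - z‖ := by
    intro y hy
    exact lip_aux isOpen_ball hd' hsub (fun x hx => hK x (hsub hx))
      z (mem_closedBall_self (norm_nonneg t)) y hy
  have hK0 : 0 ≤ K := le_trans (norm_nonneg _) (hK z hz)
  -- the auxiliary function u
  set u : ℂ → ℂ := fun y => h y - deriv h z * y with hu
  have hud : DifferentiableOn ℂ u (ball a R) :=
    hd.sub ((differentiable_id.const_mul _).differentiableOn)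
  have hderivu : ∀ y ∈ ball a R, deriv u y = deriv h y - deriv h z := by
    intro y hy
    have h1 : DifferentiableAt ℂ h y := hd.differentiableAt (isOpen_ball.mem_nhds hy)
    have h2 : DifferentiableAt ℂ (fun x : ℂ => deriv h z * x) y :=
      (differentiable_id.const_mul _).differentiableAt
    rw [hu]
    rw [deriv_fun_sub h1 h2, deriv_const_mul (d := fun x : ℂ => x) _ differentiableAt_id]
    simp
  have hub : ∀ y ∈ closedBall z ‖t‖, ‖deriv u y‖ ≤ K * ‖t‖ := by
    intro y hy
    rw [hderivu y (hsub hy)]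
    calc ‖deriv h y - deriv h z‖ ≤ K * ‖y - z‖ := hlip y hy
    _ ≤ K * ‖t‖ := by
        refine mul_le_mul_of_nonneg_left ?_ hK0
        simpa [dist_eq_norm] using mem_closedBall.1 hy
  have key : ‖u (z + t) - u z‖ ≤ (K * ‖t‖) * ‖(z + t) - z‖ := by
    refine lip_aux isOpen_ball hud hsub hub z (mem_closedBall_self (norm_nonneg t)) (z + t) ?_
    simp [dist_eq_norm]
  have heq : (h (z + t) - h z) / t - deriv h z = (u (z + t) - u z) / t := by
    field_simp [hu]
    ring
  rw [heq]
  rw [norm_div]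
  rw [div_le_iff₀ (norm_pos_iff.2 ht)]
  calc ‖u (z + t) - u z‖ ≤ (K * ‖t‖) * ‖(z + t) - z‖ := key
  _ = K * ‖t‖ * ‖t‖ := by simp

noncomputable def Dzp (g : ℂ × ℂ → ℂ) (q : ℂ × ℂ) : ℂ := deriv (fun z => g (z, q.2)) q.1
noncomputable def Dwp (g : ℂ × ℂ → ℂ) (q : ℂ × ℂ) : ℂ := deriv (fun w => g (q.1, w)) q.2

structure Nice (g : ℂ × ℂ → ℂ) (c : ℂ × ℂ) (R : ℝ) (M : ℝ) : Prop where
  holoZ : ∀ w ∈ ball c.2 R, DifferentiableOn ℂ (fun z => g (z, w)) (ball c.1 R)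
  holoW : ∀ z ∈ ball c.1 R, DifferentiableOn ℂ (fun w => g (z, w)) (ball c.2 R)
  bound : ∀ z ∈ ball c.1 R, ∀ w ∈ ball c.2 R, ‖g (z, w)‖ ≤ M

lemma Nice.boundDz {g : ℂ × ℂ → ℂ} {c : ℂ × ℂ} {R M : ℝ} (hg : Nice g c R M)
    {r : ℝ} (hrR : r < R) :
    ∀ z ∈ closedBall c.1 r, ∀ w ∈ ball c.2 R, ‖Dzp g (z, w)‖ ≤ M / ((R - r) / 2) :=
  fun z hz w hw => cauchyBound hrR (hg.holoZ w hw) (fun x hx => hg.bound x hx w hw) hz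

lemma Nice.swap {g : ℂ × ℂ → ℂ} {c : ℂ × ℂ} {R M : ℝ} (hg : Nice g c R M) :
    Nice (fun q => g (q.2, q.1)) (c.2, c.1) R M :=
  ⟨fun w hw => hg.holoW w hw, fun z hz => hg.holoZ z hz, fun z hz w hw => hg.bound w hw z hz⟩

lemma Nice.mono {g : ℂ × ℂ → ℂ} {c : ℂ × ℂ} {R M r : ℝ} (hg : Nice g c R M) (hr : r ≤ R) :
    Nice g c r M :=
  ⟨fun w hw => ((hg.holoZ w (ball_subset_ball hr hw)).mono (ball_subset_ball hr)),
   fun z hz => ((hg.holoW z (ball_subset_ball hr hz)).mono (ball_subset_ball hr)),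
   fun z hz w hw => hg.bound z (ball_subset_ball hr hz) w (ball_subset_ball hr hw)⟩

/-- Main closure lemma: `Dzp g` is Nice on a smaller polydisc. -/
lemma Nice.dz {g : ℂ × ℂ → ℂ} {c : ℂ × ℂ} {R M : ℝ} (hg : Nice g c R M)
    (hM : 0 ≤ M) {r : ℝ} (h0 : 0 ≤ r) (hrR : r < R) :
    ∃ M', 0 ≤ M' ∧ Nice (Dzp g) c r M' := by
  set d : ℝ := (R - r) / 4 with hd
  have hd0 : 0 < d := by simp [hd]; linarith
  set s1 : ℝ := r + d with hs1
  set s2 : ℝ := r + 2 * d with hs2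
  have hs1R : s1 < R := by simp [hs1, hd]; linarith
  have hs2R : s2 < R := by simp [hs2, hd]; linarith
  set K1 : ℝ := M / ((R - s2) / 2) with hK1
  have hK10 : 0 ≤ K1 := by
    apply div_nonneg hM; simp [hs2, hd]; linarith
  set K2 : ℝ := K1 / ((s2 - s1) / 2) with hK2
  have hK20 : 0 ≤ K2 := by
    apply div_nonneg hK10; simp [hs1, hs2]; linarith
  refine ⟨K1, hK10, ⟨?_, ?_, ?_⟩⟩
  · -- holoZ
    intro w hw
    have hwR : w ∈ ball c.2 R := ball_subset_ball hrR.le hw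
    have : (fun z => Dzp g (z, w)) = deriv (fun z => g (z, w)) := rfl
    rw [this]
    exact (((hg.holoZ w hwR).analyticOnNhd isOpen_ball).deriv).differentiableOn.mono
      (ball_subset_ball hrR.le)
  · -- holoW : uniform limit of difference quotients
    intro z hz
    have hzR : z ∈ ball c.1 R := ball_subset_ball hrR.le hz
    -- second derivative bound, uniform in w
    have hK2b : ∀ w ∈ ball c.2 R, ∀ x ∈ ball c.1 s1,
        ‖deriv (deriv (fun z' => g (z', w))) x‖ ≤ K2 := by
      intro w hw x hx
      have hdd : DifferentiableOn ℂ (deriv (fun z' => g (z', w))) (ball c.1 s2) :=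
        (((hg.holoZ w hw).analyticOnNhd isOpen_ball).deriv).differentiableOn.mono
          (ball_subset_ball hs2R.le)
      have hbd : ∀ y ∈ ball c.1 s2, ‖deriv (fun z' => g (z', w)) y‖ ≤ K1 := by
        intro y hy
        exact hg.boundDz hs2R y (ball_subset_closedBall hy) w hw
      have h1s : (s1 : ℝ) < s2 := by simp [hs1, hs2]; linarith
      simpa [hK2] using cauchyBound h1s hdd hbd (ball_subset_closedBall hx)
    -- the difference quotients
    set F : ℂ → ℂ → ℂ := fun t w => (g (z + t, w) - g (z, w)) / t with hF
    have hconv : TendstoUniformlyOn F (fun w => Dzp g (z, w)) (𝓝[≠] (0 : ℂ)) (ball c.2 r) := by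
      rw [Metric.tendstoUniformlyOn_iff]
      intro ε hε
      have hδ0 : 0 < min (d / 2) (ε / (K2 + 1)) := by
        apply lt_min (by linarith) (by positivity)
      have hev : ∀ᶠ t in 𝓝[≠] (0 : ℂ), ‖t‖ < min (d / 2) (ε / (K2 + 1)) := by
        apply eventually_nhdsWithin_of_eventually_nhds
        have := Metric.ball_mem_nhds (0 : ℂ) hδ0
        filter_upwards [this] with t ht
        simpa [dist_eq_norm] using ht
      have hne : ∀ᶠ t in 𝓝[≠] (0 : ℂ), t ≠ 0 := eventually_mem_nhdsWithin
      filter_upwards [hev, hne] with t ht ht0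
      intro w hw
      have hwR : w ∈ ball c.2 R := ball_subset_ball hrR.le hw
      have hsub : closedBall z ‖t‖ ⊆ ball c.1 s1 := by
        intro y hy
        have h1 : dist y z ≤ ‖t‖ := mem_closedBall.1 hy
        have h2 : dist z c.1 < r := mem_ball.1 hz
        have h3 : dist y c.1 ≤ dist y z + dist z c.1 := dist_triangle _ _ _
        have h4 : ‖t‖ < d / 2 := lt_of_lt_of_le ht (min_le_left _ _)
        exact mem_ball.2 (by simp only [hs1]; linarith)
      have hkey := dq_est ((hg.holoZ w hwR).mono (ball_subset_ball hs1R.le))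
        (hK2b w hwR) ht0 hsub
      rw [dist_eq_norm, norm_sub_rev]
      calc ‖F t w - Dzp g (z, w)‖ ≤ K2 * ‖t‖ := hkey
      _ ≤ K2 * (ε / (K2 + 1)) := by
          apply mul_le_mul_of_nonneg_left (le_of_lt (lt_of_lt_of_le ht (min_le_right _ _))) hK20
      _ < ε := by
          have h1 : K2 / (K2 + 1) < 1 := by
            rw [div_lt_one (by linarith)]; linarith
          calc K2 * (ε / (K2 + 1)) = ε * (K2 / (K2 + 1)) := by ring
          _ < ε * 1 := mul_lt_mul_of_pos_left h1 hε
          _ = ε := mul_one ε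
    have hFd : ∀ᶠ t in 𝓝[≠] (0 : ℂ), DifferentiableOn ℂ (F t) (ball c.2 r) := by
      have hev : ∀ᶠ t in 𝓝[≠] (0 : ℂ), ‖t‖ < R - r := by
        apply eventually_nhdsWithin_of_eventually_nhds
        filter_upwards [Metric.ball_mem_nhds (0 : ℂ) (by linarith : (0:ℝ) < R - r)] with t ht
        simpa [dist_eq_norm] using ht
      filter_upwards [hev] with t ht
      have hzt : z + t ∈ ball c.1 R := by
        have h2 : dist z c.1 < r := mem_ball.1 hz
        have : dist (z + t) c.1 ≤ dist (z + t) z + dist z c.1 := dist_triangle _ _ _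
        have h3 : dist (z + t) z = ‖t‖ := by simp [dist_eq_norm]
        exact mem_ball.2 (by linarith)
      exact (((hg.holoW (z + t) hzt).sub (hg.holoW z hzR)).div_const t).mono
        (ball_subset_ball hrR.le)
    exact (hconv.tendstoLocallyUniformlyOn).differentiableOn hFd isOpen_ball
  · -- bound
    intro zz hz w hw
    have h2 : s2 < R := hs2R
    calc ‖Dzp g (zz, w)‖ ≤ M / ((R - s2) / 2) := by
          refine hg.boundDz hs2R zz ?_ w (ball_subset_ball hrR.le hw)
          refine (ball_subset_closedBall.trans (closedBall_subset_closedBall ?_)) hz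
          simp [hs2]; linarith
    _ = K1 := by rw [hK1]
lemma Nice.dw {g : ℂ × ℂ → ℂ} {c : ℂ × ℂ} {R M : ℝ} (hg : Nice g c R M)
    (hM : 0 ≤ M) {r : ℝ} (h0 : 0 ≤ r) (hrR : r < R) :
    ∃ M', 0 ≤ M' ∧ Nice (Dwp g) c r M' := by
  obtain ⟨M', hM'0, h⟩ := (hg.swap).dz hM h0 hrR
  exact ⟨M', hM'0, h.swap⟩

/-- Local Lipschitz bound at the center of a Nice polydisc. -/
lemma Nice.cont {g : ℂ × ℂ → ℂ} {c : ℂ × ℂ} {R M : ℝ} (hg : Nice g c R M)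
    (hR : 0 < R) (hM : 0 ≤ M) :
    ∃ K, 0 ≤ K ∧ ∀ q ∈ ball c (R / 2), ‖g q - g c‖ ≤ K * dist q c := by
  set K1 : ℝ := M / ((R - R / 2) / 2) with hK1
  have hK10 : 0 ≤ K1 := div_nonneg hM (by linarith)
  refine ⟨2 * K1, by linarith, ?_⟩
  intro q hq
  have hq' : q ∈ ball c.1 (R / 2) ×ˢ ball c.2 (R / 2) := by
    rw [ball_prod_same]; exact hq
  obtain ⟨hq1, hq2⟩ := hq'
  have hq2R : q.2 ∈ ball c.2 R := ball_subset_ball (by linarith) hq2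
  have hd1 : dist q.1 c.1 ≤ dist q c := by
    rw [Prod.dist_eq]; exact le_max_left _ _
  have hd2 : dist q.2 c.2 ≤ dist q c := by
    rw [Prod.dist_eq]; exact le_max_right _ _
  have half : (R : ℝ) / 2 < R := by linarith
  -- z-part
  have T1 : ‖g (q.1, q.2) - g (c.1, q.2)‖ ≤ K1 * ‖q.1 - c.1‖ := by
    refine lip_aux isOpen_ball (hg.holoZ q.2 hq2R)
      (closedBall_subset_ball half) ?_ c.1 (mem_closedBall_self (by linarith)) q.1
      (ball_subset_closedBall hq1)
    intro x hx
    exact hg.boundDz half x hx q.2 hq2R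
  -- w-part
  have T2 : ‖g (c.1, q.2) - g (c.1, c.2)‖ ≤ K1 * ‖q.2 - c.2‖ := by
    refine lip_aux isOpen_ball (hg.holoW c.1 (mem_ball_self hR))
      (closedBall_subset_ball half) ?_ c.2 (mem_closedBall_self (by linarith)) q.2
      (ball_subset_closedBall hq2)
    intro x hx
    exact cauchyBound half (hg.holoW c.1 (mem_ball_self hR))
      (fun y hy => hg.bound c.1 (mem_ball_self hR) y hy) hx
  calc ‖g q - g c‖ = ‖(g (q.1, q.2) - g (c.1, q.2)) + (g (c.1, q.2) - g (c.1, c.2))‖ := by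
        have : g q = g (q.1, q.2) := rfl
        rw [this]; congr 1; ring
  _ ≤ ‖g (q.1, q.2) - g (c.1, q.2)‖ + ‖g (c.1, q.2) - g (c.1, c.2)‖ := norm_add_le _ _
  _ ≤ K1 * ‖q.1 - c.1‖ + K1 * ‖q.2 - c.2‖ := add_le_add T1 T2
  _ ≤ K1 * dist q c + K1 * dist q c := by
      rw [← dist_eq_norm, ← dist_eq_norm]
      exact add_le_add (mul_le_mul_of_nonneg_left hd1 hK10)
        (mul_le_mul_of_nonneg_left hd2 hK10)
  _ = 2 * K1 * dist q c := by ring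

/-- Osgood-type joint differentiability from separate holomorphy and
continuity of the `z`-partial. -/
lemma joint_diff {g : ℂ × ℂ → ℂ} {c : ℂ × ℂ} {ρ : ℝ} (hρ : 0 < ρ)
    (holoZ : ∀ w ∈ ball c.2 ρ, DifferentiableOn ℂ (fun z => g (z, w)) (ball c.1 ρ))
    (hw : DifferentiableAt ℂ (fun w => g (c.1, w)) c.2)
    (hcont : ∀ ε > 0, ∃ δ > 0, ∀ q : ℂ × ℂ, dist q c < δ → ‖Dzp g q - Dzp g c‖ ≤ ε) :
    HasFDerivAt g ((Dzp g c) • (ContinuousLinearMap.fst ℂ ℂ ℂ)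
      + (Dwp g c) • (ContinuousLinearMap.snd ℂ ℂ ℂ)) c := by
  rw [hasFDerivAt_iff_isLittleO_nhds_zero, Asymptotics.isLittleO_iff]
  intro C hC
  have hw' : HasDerivAt (fun w => g (c.1, w)) (Dwp g c) c.2 := hw.hasDerivAt
  have hterm2 : ∀ᶠ w in 𝓝 c.2,
      ‖g (c.1, w) - g (c.1, c.2) - (w - c.2) * Dwp g c‖ ≤ C / 2 * ‖w - c.2‖ := by
    have := (hasDerivAt_iff_isLittleO.1 hw')
    have h2 := (Asymptotics.isLittleO_iff.1 this) (by linarith : (0:ℝ) < C / 2)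
    filter_upwards [h2] with w hwv
    simpa [smul_eq_mul, mul_comm] using hwv
  rw [Metric.eventually_nhds_iff] at hterm2
  obtain ⟨δ2, hδ2, H2⟩ := hterm2
  obtain ⟨δ1, hδ1, H1⟩ := hcont (C / 2) (by linarith)
  have hδ : 0 < min (min δ1 δ2) ρ := lt_min (lt_min hδ1 hδ2) hρ
  filter_upwards [Metric.ball_mem_nhds (0 : ℂ × ℂ) hδ] with h hh
  have hhn : ‖h‖ < min (min δ1 δ2) ρ := by simpa [dist_eq_norm] using hh
  have hh1 : ‖h.1‖ ≤ ‖h‖ := norm_fst_le h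
  have hh2 : ‖h.2‖ ≤ ‖h‖ := norm_snd_le h
  have hhδ1 : ‖h‖ < δ1 := lt_of_lt_of_le hhn (le_trans (min_le_left _ _) (min_le_left _ _))
  have hhδ2 : ‖h‖ < δ2 := lt_of_lt_of_le hhn (le_trans (min_le_left _ _) (min_le_right _ _))
  have hhρ : ‖h‖ < ρ := lt_of_lt_of_le hhn (min_le_right _ _)
  have hw2 : c.2 + h.2 ∈ ball c.2 ρ := by
    rw [mem_ball, dist_eq_norm]
    calc ‖c.2 + h.2 - c.2‖ = ‖h.2‖ := by rw [add_sub_cancel_left]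
    _ ≤ ‖h‖ := hh2
    _ < ρ := hhρ
  -- w-part estimate
  have T2 : ‖g (c.1, c.2 + h.2) - g (c.1, c.2) - Dwp g c * h.2‖ ≤ C / 2 * ‖h‖ := by
    have := H2 (y := c.2 + h.2) (by
      rw [dist_eq_norm]
      calc ‖c.2 + h.2 - c.2‖ = ‖h.2‖ := by rw [add_sub_cancel_left]
      _ ≤ ‖h‖ := hh2
      _ < δ2 := hhδ2)
    calc ‖g (c.1, c.2 + h.2) - g (c.1, c.2) - Dwp g c * h.2‖
        = ‖g (c.1, c.2 + h.2) - g (c.1, c.2) - (c.2 + h.2 - c.2) * Dwp g c‖ := by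
          congr 1; ring
    _ ≤ C / 2 * ‖c.2 + h.2 - c.2‖ := this
    _ ≤ C / 2 * ‖h‖ := by
        have : ‖c.2 + h.2 - c.2‖ = ‖h.2‖ := by rw [add_sub_cancel_left]
        rw [this]
        exact mul_le_mul_of_nonneg_left hh2 (by linarith)
  -- z-part estimate
  set k : ℂ → ℂ := fun ζ => g (ζ, c.2 + h.2) - Dzp g c * ζ with hk
  have hkd : DifferentiableOn ℂ k (ball c.1 ρ) :=
    (holoZ _ hw2).sub ((differentiable_id.const_mul _).differentiableOn)
  have hkderiv : ∀ x ∈ ball c.1 ρ, deriv k x = Dzp g (x, c.2 + h.2) - Dzp g c := by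
    intro x hx
    have h1 : DifferentiableAt ℂ (fun ζ => g (ζ, c.2 + h.2)) x :=
      (holoZ _ hw2).differentiableAt (isOpen_ball.mem_nhds hx)
    have h2 : DifferentiableAt ℂ (fun ζ : ℂ => Dzp g c * ζ) x :=
      differentiableAt_id.const_mul _
    have h3 : HasDerivAt (fun ζ : ℂ => Dzp g c * ζ) (Dzp g c) x := by
      simpa using (hasDerivAt_id x).const_mul (Dzp g c)
    rw [hk, deriv_fun_sub h1 h2, h3.deriv]
    rfl
  have hsubk : closedBall c.1 ‖h.1‖ ⊆ ball c.1 ρ := by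
    intro y hy
    have := mem_closedBall.1 hy
    exact mem_ball.2 (lt_of_le_of_lt this (lt_of_le_of_lt hh1 hhρ))
  have hkb : ∀ x ∈ closedBall c.1 ‖h.1‖, ‖deriv k x‖ ≤ C / 2 := by
    intro x hx
    rw [hkderiv x (hsubk hx)]
    refine H1 (x, c.2 + h.2) ?_
    rw [Prod.dist_eq]
    refine max_lt ?_ ?_
    · exact lt_of_le_of_lt (mem_closedBall.1 hx) (lt_of_le_of_lt hh1 hhδ1)
    · rw [dist_eq_norm]
      calc ‖c.2 + h.2 - c.2‖ = ‖h.2‖ := by rw [add_sub_cancel_left]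
      _ ≤ ‖h‖ := hh2
      _ < δ1 := hhδ1
  have T1 : ‖g (c.1 + h.1, c.2 + h.2) - g (c.1, c.2 + h.2) - Dzp g c * h.1‖ ≤ C / 2 * ‖h‖ := by
    have key := lip_aux isOpen_ball hkd hsubk hkb c.1
      (mem_closedBall_self (norm_nonneg _)) (c.1 + h.1)
      (by simp [add_sub_cancel_left])
    have heq : k (c.1 + h.1) - k c.1
        = g (c.1 + h.1, c.2 + h.2) - g (c.1, c.2 + h.2) - Dzp g c * h.1 := by
      rw [hk]; ring
    rw [heq] at key
    calc ‖g (c.1 + h.1, c.2 + h.2) - g (c.1, c.2 + h.2) - Dzp g c * h.1‖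
        ≤ C / 2 * ‖c.1 + h.1 - c.1‖ := key
    _ ≤ C / 2 * ‖h‖ := by
        have : ‖c.1 + h.1 - c.1‖ = ‖h.1‖ := by rw [add_sub_cancel_left]
        rw [this]
        exact mul_le_mul_of_nonneg_left hh1 (by linarith)
  -- combine
  have hL : ((Dzp g c) • (ContinuousLinearMap.fst ℂ ℂ ℂ)
      + (Dwp g c) • (ContinuousLinearMap.snd ℂ ℂ ℂ)) h = Dzp g c * h.1 + Dwp g c * h.2 := by
    simp [smul_eq_mul]
  have hch : c + h = (c.1 + h.1, c.2 + h.2) := rfl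
  rw [hL, hch]
  calc ‖g (c.1 + h.1, c.2 + h.2) - g c - (Dzp g c * h.1 + Dwp g c * h.2)‖
      = ‖(g (c.1 + h.1, c.2 + h.2) - g (c.1, c.2 + h.2) - Dzp g c * h.1)
        + (g (c.1, c.2 + h.2) - g (c.1, c.2) - Dwp g c * h.2)‖ := by
        have : g c = g (c.1, c.2) := rfl
        rw [this]; congr 1; ring
  _ ≤ ‖g (c.1 + h.1, c.2 + h.2) - g (c.1, c.2 + h.2) - Dzp g c * h.1‖
      + ‖g (c.1, c.2 + h.2) - g (c.1, c.2) - Dwp g c * h.2‖ := norm_add_le _ _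
  _ ≤ C / 2 * ‖h‖ + C / 2 * ‖h‖ := add_le_add T1 T2
  _ = C * ‖h‖ := by ring
lemma clm_eval (L : ℂ × ℂ →L[ℂ] ℂ) (v : ℂ × ℂ) :
    L v = v.1 * L (1, 0) + v.2 * L (0, 1) := by
  have hv : v = v.1 • ((1 : ℂ), (0 : ℂ)) + v.2 • ((0 : ℂ), (1 : ℂ)) := by
    simp [Prod.ext_iff]
  calc L v = L (v.1 • ((1 : ℂ), (0 : ℂ)) + v.2 • ((0 : ℂ), (1 : ℂ))) := by rw [← hv]
  _ = v.1 * L (1, 0) + v.2 * L (0, 1) := by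
      rw [map_add, map_smul, map_smul]; simp [smul_eq_mul]

lemma hasDerivAt_z {f : ℂ × ℂ → ℂ} {q : ℂ × ℂ} (hf : DifferentiableAt ℂ f q) :
    HasDerivAt (fun z => f (z, q.2)) (fderiv ℂ f q (1, 0)) q.1 := by
  have h2 : HasDerivAt (fun z : ℂ => (z, q.2)) ((1 : ℂ), (0 : ℂ)) q.1 :=
    (hasDerivAt_id q.1).prodMk (hasDerivAt_const q.1 q.2)
  exact hf.hasFDerivAt.comp_hasDerivAt q.1 h2

lemma hasDerivAt_w {f : ℂ × ℂ → ℂ} {q : ℂ × ℂ} (hf : DifferentiableAt ℂ f q) :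
    HasDerivAt (fun w => f (q.1, w)) (fderiv ℂ f q (0, 1)) q.2 := by
  have h2 : HasDerivAt (fun w : ℂ => (q.1, w)) ((0 : ℂ), (1 : ℂ)) q.2 :=
    (hasDerivAt_const q.2 q.1).prodMk (hasDerivAt_id q.2)
  exact hf.hasFDerivAt.comp_hasDerivAt q.2 h2

lemma pz_eq_Dzp {f : ℂ × ℂ → ℂ} {q : ℂ × ℂ} (hf : DifferentiableAt ℂ f q) :
    pz f q = Dzp f q := ((hasDerivAt_z hf).deriv).symm

lemma pw_eq_Dwp {f : ℂ × ℂ → ℂ} {q : ℂ × ℂ} (hf : DifferentiableAt ℂ f q) :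
    pw f q = Dwp f q := ((hasDerivAt_w hf).deriv).symm

/-- ε-δ continuity of a Nice function at the center. -/
lemma Nice.contAt {g : ℂ × ℂ → ℂ} {c : ℂ × ℂ} {R M : ℝ} (hg : Nice g c R M)
    (hR : 0 < R) (hM : 0 ≤ M) :
    ∀ ε > 0, ∃ δ > 0, ∀ q : ℂ × ℂ, dist q c < δ → ‖g q - g c‖ ≤ ε := by
  obtain ⟨K, hK0, hKb⟩ := hg.cont hR hM
  intro ε hε
  refine ⟨min (R / 2) (ε / (K + 1)), lt_min (by linarith) (by positivity), ?_⟩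
  intro q hq
  have hq1 : dist q c < R / 2 := lt_of_lt_of_le hq (min_le_left _ _)
  have hq2 : dist q c ≤ ε / (K + 1) := (lt_of_lt_of_le hq (min_le_right _ _)).le
  calc ‖g q - g c‖ ≤ K * dist q c := hKb q (mem_ball.2 hq1)
  _ ≤ K * (ε / (K + 1)) := mul_le_mul_of_nonneg_left hq2 hK0
  _ ≤ (K + 1) * (ε / (K + 1)) := by
      have h0 : 0 ≤ ε / (K + 1) := by positivity
      nlinarith
  _ = ε := by field_simp

theorem master {V : Set (ℂ × ℂ)} (hV : IsOpen V) {f : ℂ × ℂ → ℂ}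
    (hf : DifferentiableOn ℂ f V) {x : ℂ × ℂ} (hx : x ∈ V) :
    DifferentiableAt ℂ (pz f) x ∧ DifferentiableAt ℂ (pw f) x ∧
      pz (pw f) x = pw (pz f) x := by
  obtain ⟨R, hR0, hRV⟩ := Metric.isOpen_iff.1 hV x hx
  have hfd : ∀ q ∈ ball x R, DifferentiableAt ℂ f q := fun q hq =>
    hf.differentiableAt (hV.mem_nhds (hRV hq))
  have hcomp : IsCompact (closedBall x (R / 2)) := isCompact_closedBall _ _
  have hcb : closedBall x (R / 2) ⊆ ball x R := by
    intro q hq; exact mem_ball.2 (lt_of_le_of_lt (mem_closedBall.1 hq) (by linarith))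
  have hcont : ContinuousOn f (closedBall x (R / 2)) := fun q hq =>
    ((hfd q (hcb hq)).continuousAt).continuousWithinAt
  obtain ⟨M, hM⟩ := hcomp.exists_bound_of_continuousOn hcont
  have hM0 : 0 ≤ M := le_trans (norm_nonneg _) (hM x (mem_closedBall_self (by linarith)))
  have hmem : ∀ z ∈ ball x.1 (R / 2), ∀ w ∈ ball x.2 (R / 2), (z, w) ∈ ball x (R / 2) := by
    intro z hz w hw
    rw [mem_ball, Prod.dist_eq]
    exact max_lt (mem_ball.1 hz) (mem_ball.1 hw)
  have hNf : Nice f x (R / 2) M := by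
    refine ⟨?_, ?_, ?_⟩
    · intro w hw z hz
      exact ((hfd _ (ball_subset_ball (by linarith) (hmem z hz w hw))).comp z
        (differentiableAt_id.prodMk (differentiableAt_const w))).differentiableWithinAt
    · intro z hz w hw
      exact ((hfd _ (ball_subset_ball (by linarith) (hmem z hz w hw))).comp w
        ((differentiableAt_const z).prodMk differentiableAt_id)).differentiableWithinAt
    · intro z hz w hw
      exact hM _ (ball_subset_closedBall (hmem z hz w hw))
  -- first-level partials
  obtain ⟨M1, hM10, hNz⟩ := hNf.dz hM0 (by linarith : (0:ℝ) ≤ R / 4) (by linarith)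
  obtain ⟨M1', hM10', hNw⟩ := hNf.dw hM0 (by linarith : (0:ℝ) ≤ R / 4) (by linarith)
  -- second-level partials (only the z-partials of the first-level ones are needed)
  obtain ⟨M2, hM20, hNzz⟩ := hNz.dz hM10 (by linarith : (0:ℝ) ≤ R / 8) (by linarith)
  obtain ⟨M2', hM20', hNwz⟩ := hNw.dz hM10' (by linarith : (0:ℝ) ≤ R / 8) (by linarith)
  -- joint differentiability of Dzp f and Dwp f at x
  have hJz : HasFDerivAt (Dzp f) ((Dzp (Dzp f) x) • (ContinuousLinearMap.fst ℂ ℂ ℂ)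
      + (Dwp (Dzp f) x) • (ContinuousLinearMap.snd ℂ ℂ ℂ)) x := by
    refine joint_diff (by linarith : (0:ℝ) < R / 4) hNz.holoZ ?_ ?_
    · exact (hNz.holoW x.1 (mem_ball_self (by linarith))).differentiableAt
        (isOpen_ball.mem_nhds (mem_ball_self (by linarith)))
    · exact hNzz.contAt (by linarith) hM20
  have hJw : HasFDerivAt (Dwp f) ((Dzp (Dwp f) x) • (ContinuousLinearMap.fst ℂ ℂ ℂ)
      + (Dwp (Dwp f) x) • (ContinuousLinearMap.snd ℂ ℂ ℂ)) x := by
    refine joint_diff (by linarith : (0:ℝ) < R / 4) hNw.holoZ ?_ ?_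
    · exact (hNw.holoW x.1 (mem_ball_self (by linarith))).differentiableAt
        (isOpen_ball.mem_nhds (mem_ball_self (by linarith)))
    · exact hNwz.contAt (by linarith) hM20'
  -- transfer to pz f and pw f
  have hball : ball x R ∈ 𝓝 x := isOpen_ball.mem_nhds (mem_ball_self hR0)
  have hEz : pz f =ᶠ[𝓝 x] Dzp f :=
    Filter.eventuallyEq_of_mem hball (fun q hq => pz_eq_Dzp (hfd q hq))
  have hEw : pw f =ᶠ[𝓝 x] Dwp f :=
    Filter.eventuallyEq_of_mem hball (fun q hq => pw_eq_Dwp (hfd q hq))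
  have hdz : DifferentiableAt ℂ (pz f) x := (hJz.differentiableAt).congr_of_eventuallyEq hEz
  have hdw : DifferentiableAt ℂ (pw f) x := (hJw.differentiableAt).congr_of_eventuallyEq hEw
  refine ⟨hdz, hdw, ?_⟩
  -- symmetry of second derivatives
  have hrep : ∀ q ∈ ball x R, fderiv ℂ f q
      = pz f q • (ContinuousLinearMap.fst ℂ ℂ ℂ) + pw f q • (ContinuousLinearMap.snd ℂ ℂ ℂ) := by
    intro q hq
    refine ContinuousLinearMap.ext fun v => ?_
    rw [clm_eval (fderiv ℂ f q) v]
    simp [pz, pw, smul_eq_mul]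
    ring
  have hdiff2 : DifferentiableAt ℂ
      (fun q => pz f q • (ContinuousLinearMap.fst ℂ ℂ ℂ)
        + pw f q • (ContinuousLinearMap.snd ℂ ℂ ℂ)) x :=
    (hdz.smul_const _).add (hdw.smul_const _)
  have hdf : DifferentiableAt ℂ (fderiv ℂ f) x :=
    hdiff2.congr_of_eventuallyEq (Filter.eventuallyEq_of_mem hball hrep)
  have hsym := second_derivative_symmetric_of_eventually (𝕜 := ℂ) (f := f)
    (f' := fderiv ℂ f) (f'' := fderiv ℂ (fderiv ℂ f) x)
    (Filter.eventually_iff_exists_mem.2 ⟨ball x R, hball, fun q hq => (hfd q hq).hasFDerivAt⟩)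
    hdf.hasFDerivAt
  have h1 : pz (pw f) x = (fderiv ℂ (fderiv ℂ f) x (1, 0)) (0, 1) := by
    have hc : HasFDerivAt (fun q => (ContinuousLinearMap.apply ℂ ℂ ((0:ℂ), (1:ℂ))) (fderiv ℂ f q))
        ((ContinuousLinearMap.apply ℂ ℂ ((0:ℂ), (1:ℂ))).comp (fderiv ℂ (fderiv ℂ f) x)) x :=
      (ContinuousLinearMap.apply ℂ ℂ ((0:ℂ), (1:ℂ))).hasFDerivAt.comp x hdf.hasFDerivAt
    have : pw f = fun q => (ContinuousLinearMap.apply ℂ ℂ ((0:ℂ), (1:ℂ))) (fderiv ℂ f q) := rfl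
    calc pz (pw f) x = fderiv ℂ (pw f) x (1, 0) := rfl
    _ = (fderiv ℂ (fderiv ℂ f) x (1, 0)) (0, 1) := by
        rw [this, hc.fderiv]; rfl
  have h2 : pw (pz f) x = (fderiv ℂ (fderiv ℂ f) x (0, 1)) (1, 0) := by
    have hc : HasFDerivAt (fun q => (ContinuousLinearMap.apply ℂ ℂ ((1:ℂ), (0:ℂ))) (fderiv ℂ f q))
        ((ContinuousLinearMap.apply ℂ ℂ ((1:ℂ), (0:ℂ))).comp (fderiv ℂ (fderiv ℂ f) x)) x :=
      (ContinuousLinearMap.apply ℂ ℂ ((1:ℂ), (0:ℂ))).hasFDerivAt.comp x hdf.hasFDerivAt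
    have : pz f = fun q => (ContinuousLinearMap.apply ℂ ℂ ((1:ℂ), (0:ℂ))) (fderiv ℂ f q) := rfl
    calc pw (pz f) x = fderiv ℂ (pz f) x (0, 1) := rfl
    _ = (fderiv ℂ (fderiv ℂ f) x (0, 1)) (1, 0) := by
        rw [this, hc.fderiv]; rfl
  rw [h1, h2, hsym (1, 0) (0, 1)]
noncomputable def Lphi (r : ℂ) : (ℂ × ℂ) →L[ℂ] (ℂ × ℂ) :=
  ((ContinuousLinearMap.fst ℂ ℂ ℂ) + r • (ContinuousLinearMap.snd ℂ ℂ ℂ)).prod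
    (ContinuousLinearMap.snd ℂ ℂ ℂ)

lemma Lphi_eval10 (L : ℂ × ℂ →L[ℂ] ℂ) (r : ℂ) :
    (L.comp (Lphi r)) (1, 0) = L (1, 0) := by
  have h : (Lphi r) ((1 : ℂ), (0 : ℂ)) = (1, 0) := by
    simp [Lphi, Prod.ext_iff]
  rw [ContinuousLinearMap.comp_apply, h]

lemma Lphi_eval01 (L : ℂ × ℂ →L[ℂ] ℂ) (r : ℂ) :
    (L.comp (Lphi r)) (0, 1) = r * L (1, 0) + L (0, 1) := by
  have h : (Lphi r) ((0 : ℂ), (1 : ℂ)) = (r, 1) := by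
    simp [Lphi, Prod.ext_iff]
  rw [ContinuousLinearMap.comp_apply, h, clm_eval]
  simp

lemma hasFDerivAt_phi {γ : ℂ → ℂ} {q : ℂ × ℂ} (hγ : DifferentiableAt ℂ γ q.2) :
    HasFDerivAt (fun p : ℂ × ℂ => (p.1 + γ p.2, p.2)) (Lphi (deriv γ q.2)) q := by
  have h1 : HasFDerivAt (fun p : ℂ × ℂ => γ p.2)
      ((deriv γ q.2) • (ContinuousLinearMap.snd ℂ ℂ ℂ)) q :=
    hγ.hasDerivAt.comp_hasFDerivAt q hasFDerivAt_snd
  exact ((hasFDerivAt_fst).add h1).prodMk hasFDerivAt_snd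

lemma chain_hasFDerivAt {g : ℂ × ℂ → ℂ} {γ : ℂ → ℂ} {q : ℂ × ℂ}
    (hg : DifferentiableAt ℂ g (q.1 + γ q.2, q.2)) (hγ : DifferentiableAt ℂ γ q.2) :
    HasFDerivAt (fun p : ℂ × ℂ => g (p.1 + γ p.2, p.2))
      ((fderiv ℂ g (q.1 + γ q.2, q.2)).comp (Lphi (deriv γ q.2))) q :=
  hg.hasFDerivAt.comp q (hasFDerivAt_phi hγ)

lemma chain_pz {g : ℂ × ℂ → ℂ} {γ : ℂ → ℂ} {q : ℂ × ℂ}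
    (hg : DifferentiableAt ℂ g (q.1 + γ q.2, q.2)) (hγ : DifferentiableAt ℂ γ q.2) :
    pz (fun p : ℂ × ℂ => g (p.1 + γ p.2, p.2)) q = pz g (q.1 + γ q.2, q.2) := by
  show fderiv ℂ (fun p : ℂ × ℂ => g (p.1 + γ p.2, p.2)) q (1, 0) = _
  rw [(chain_hasFDerivAt hg hγ).fderiv, Lphi_eval10]
  rfl

lemma chain_pw {g : ℂ × ℂ → ℂ} {γ : ℂ → ℂ} {q : ℂ × ℂ}
    (hg : DifferentiableAt ℂ g (q.1 + γ q.2, q.2)) (hγ : DifferentiableAt ℂ γ q.2) :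
    pw (fun p : ℂ × ℂ => g (p.1 + γ p.2, p.2)) q
      = deriv γ q.2 * pz g (q.1 + γ q.2, q.2) + pw g (q.1 + γ q.2, q.2) := by
  show fderiv ℂ (fun p : ℂ × ℂ => g (p.1 + γ p.2, p.2)) q (0, 1) = _
  rw [(chain_hasFDerivAt hg hγ).fderiv, Lphi_eval01]
  rfl


/-- for `f` holomorphic on an open `V ⊆ ℂ²`, `γ` holomorphic on
an open `U ⊆ ℂ`, and `F(Z,W) := f(Z + γ(W), W)`, one has
`Δ_f(Z + γ(W), W) = Δ_F(Z,W) + γ''(W)·F_Z(Z,W)³` for all `(Z,W)` with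
`W ∈ U` and `(Z + γ(W), W) ∈ V`. -/
theorem stmt5 (V : Set (ℂ × ℂ)) (hV : IsOpen V) (f : ℂ × ℂ → ℂ)
    (hf : DifferentiableOn ℂ f V)
    (U : Set ℂ) (hU : IsOpen U) (γ : ℂ → ℂ) (hγ : DifferentiableOn ℂ γ U)
    (F : ℂ × ℂ → ℂ) (hF : ∀ q : ℂ × ℂ, F q = f (q.1 + γ q.2, q.2)) :
    ∀ q : ℂ × ℂ, q.2 ∈ U → (q.1 + γ q.2, q.2) ∈ V →
      Delta f (q.1 + γ q.2, q.2)
        = Delta F q + deriv (deriv γ) q.2 * (pz F q) ^ 3 := by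
  have hFe : F = fun p : ℂ × ℂ => f (p.1 + γ p.2, p.2) := funext hF
  subst hFe
  intro q hqU hqV
  -- the open set Ω
  set φ : ℂ × ℂ → ℂ × ℂ := fun p => (p.1 + γ p.2, p.2) with hφdef
  set Ω : Set (ℂ × ℂ) := {p : ℂ × ℂ | p.2 ∈ U} ∩ φ ⁻¹' V with hΩdef
  have hs : IsOpen {p : ℂ × ℂ | p.2 ∈ U} := hU.preimage continuous_snd
  have hφc : ContinuousOn φ {p : ℂ × ℂ | p.2 ∈ U} := by
    apply ContinuousOn.prodMk
    · exact (continuous_fst.continuousOn).add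
        (hγ.continuousOn.comp continuous_snd.continuousOn (fun p hp => hp))
    · exact continuous_snd.continuousOn
  have hΩ : IsOpen Ω := hφc.isOpen_inter_preimage hs hV
  have hqΩ : q ∈ Ω := ⟨hqU, hqV⟩
  have hγd : ∀ p ∈ Ω, DifferentiableAt ℂ γ p.2 := fun p hp =>
    hγ.differentiableAt (hU.mem_nhds hp.1)
  have hfd : ∀ p ∈ Ω, DifferentiableAt ℂ f (p.1 + γ p.2, p.2) := fun p hp =>
    hf.differentiableAt (hV.mem_nhds hp.2)
  -- first-order identities on Ω
  have h1 : ∀ p ∈ Ω, pz (fun p : ℂ × ℂ => f (p.1 + γ p.2, p.2)) p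
      = pz f (p.1 + γ p.2, p.2) := fun p hp => chain_pz (hfd p hp) (hγd p hp)
  have h2 : ∀ p ∈ Ω, pw (fun p : ℂ × ℂ => f (p.1 + γ p.2, p.2)) p
      = deriv γ p.2 * pz f (p.1 + γ p.2, p.2) + pw f (p.1 + γ p.2, p.2) :=
    fun p hp => chain_pw (hfd p hp) (hγd p hp)
  -- regularity of f at φ q
  obtain ⟨hfz, hfw, hfsym⟩ := master hV hf hqV
  have hγq : DifferentiableAt ℂ γ q.2 := hγd q hqΩ
  have hγa : AnalyticOnNhd ℂ γ U := hγ.analyticOnNhd hU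
  have hdγ : DifferentiableAt ℂ (deriv γ) q.2 := ((hγa.deriv) q.2 hqU).differentiableAt
  have hΩnhds : Ω ∈ 𝓝 q := hΩ.mem_nhds hqΩ
  have hEz : pz (fun p : ℂ × ℂ => f (p.1 + γ p.2, p.2))
      =ᶠ[𝓝 q] (fun p => pz f (p.1 + γ p.2, p.2)) :=
    Filter.eventuallyEq_of_mem hΩnhds h1
  have hEw : pw (fun p : ℂ × ℂ => f (p.1 + γ p.2, p.2))
      =ᶠ[𝓝 q] (fun p => deriv γ p.2 * pz f (p.1 + γ p.2, p.2) + pw f (p.1 + γ p.2, p.2)) :=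
    Filter.eventuallyEq_of_mem hΩnhds h2
  -- second-order identities at q
  have h3 : pz (pz (fun p : ℂ × ℂ => f (p.1 + γ p.2, p.2))) q
      = pz (pz f) (q.1 + γ q.2, q.2) := by
    show fderiv ℂ (pz (fun p : ℂ × ℂ => f (p.1 + γ p.2, p.2))) q (1, 0) = _
    rw [hEz.fderiv_eq]
    exact chain_pz hfz hγq
  have h4 : pw (pz (fun p : ℂ × ℂ => f (p.1 + γ p.2, p.2))) q
      = deriv γ q.2 * pz (pz f) (q.1 + γ q.2, q.2) + pw (pz f) (q.1 + γ q.2, q.2) := by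
    show fderiv ℂ (pz (fun p : ℂ × ℂ => f (p.1 + γ p.2, p.2))) q (0, 1) = _
    rw [hEz.fderiv_eq]
    exact chain_pw hfz hγq
  have h5 : pw (pw (fun p : ℂ × ℂ => f (p.1 + γ p.2, p.2))) q
      = deriv (deriv γ) q.2 * pz f (q.1 + γ q.2, q.2)
        + deriv γ q.2 * (deriv γ q.2 * pz (pz f) (q.1 + γ q.2, q.2)
            + pw (pz f) (q.1 + γ q.2, q.2))
        + (deriv γ q.2 * pz (pw f) (q.1 + γ q.2, q.2) + pw (pw f) (q.1 + γ q.2, q.2)) := by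
    show fderiv ℂ (pw (fun p : ℂ × ℂ => f (p.1 + γ p.2, p.2))) q (0, 1) = _
    rw [hEw.fderiv_eq]
    have hA := chain_hasFDerivAt (g := pz f) hfz hγq
    have hB := chain_hasFDerivAt (g := pw f) hfw hγq
    have hDd : HasFDerivAt (fun p : ℂ × ℂ => deriv γ p.2)
        (deriv (deriv γ) q.2 • (ContinuousLinearMap.snd ℂ ℂ ℂ)) q :=
      hdγ.hasDerivAt.comp_hasFDerivAt q hasFDerivAt_snd
    have hprod := hDd.mul hA
    have hsum := hprod.add hB
    rw [HasFDerivAt.fderiv (f := fun p : ℂ × ℂ => deriv γ p.2 * pz f (p.1 + γ p.2, p.2) + pw f (p.1 + γ p.2, p.2)) hsum]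
    rw [ContinuousLinearMap.add_apply, ContinuousLinearMap.add_apply,
      ContinuousLinearMap.smul_apply, ContinuousLinearMap.smul_apply, Lphi_eval01,
      Lphi_eval01, ContinuousLinearMap.smul_apply]
    have hsnd : (ContinuousLinearMap.snd ℂ ℂ ℂ) ((0 : ℂ), (1 : ℂ)) = 1 := rfl
    rw [hsnd]
    simp only [smul_eq_mul, pz, pw]
    ring
  -- final assembly
  have e1 : pz (fun p : ℂ × ℂ => f (p.1 + γ p.2, p.2)) q = pz f (q.1 + γ q.2, q.2) :=
    h1 q hqΩ
  have e2 : pw (fun p : ℂ × ℂ => f (p.1 + γ p.2, p.2)) q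
      = deriv γ q.2 * pz f (q.1 + γ q.2, q.2) + pw f (q.1 + γ q.2, q.2) := h2 q hqΩ
  simp only [Delta]
  rw [e1, e2, h3, h4, h5, hfsym]
  ring
end

section
/- Let H(z,w) = c·∏_{i=1}^r (z − z_i w)^{m_i} ∈ ℂ[z,w], where c ≠ 0, the z_i ∈ ℂ are pairwise distinct, r ≥ 2, m_i ≥ 1, and m := Σ m_i. Set G(u) := ∏_{i=1}^r (u − z_i)^{m_i − 1} ∈ ℂ[u]. Then G(u) divides both one-variable polynomials H_z(u,1) and H_w(u,1); writing H_z(u,1) = G(u)·P(u) and H_w(u,1) = G(u)·Q(u), the polynomials P and Q are coprime in ℂ[u], P has degree exactly r − 1 with leading coefficient m·c, and Q has degree at most r − 1. (Hence the rational map u ↦ H_z(u,1)/H_w(u,1) has degree r − 1.) -/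
open MvPolynomial

lemma pderiv_finset_prod {σ ι : Type*} [DecidableEq ι] (b : σ) (s : Finset ι)
    (f : ι → MvPolynomial σ ℂ) :
    pderiv b (∏ j ∈ s, f j) = ∑ j ∈ s, (∏ k ∈ s.erase j, f k) * pderiv b (f j) := by
  induction s using Finset.induction_on with
  | empty => simp
  | @insert a s ha ih =>
    have hrw : ∀ j ∈ s, (∏ k ∈ (insert a s).erase j, f k) * pderiv b (f j)
        = f a * ((∏ k ∈ s.erase j, f k) * pderiv b (f j)) := by
      intro j hj
      have hne : a ≠ j := fun h => ha (h ▸ hj)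
      rw [Finset.erase_insert_of_ne hne, Finset.prod_insert
        (fun h => ha (Finset.mem_of_mem_erase h)), mul_assoc]
    rw [Finset.prod_insert ha, pderiv_mul, ih, Finset.sum_insert ha,
      Finset.erase_insert ha, Finset.sum_congr rfl hrw, ← Finset.mul_sum,
      mul_comm (pderiv b (f a))]


/-- Substitution `w = 1`, `z = u`: the algebra map sending a polynomial
`H(z,w)` to the one-variable polynomial `H(u,1)`. -/
noncomputable def subW1 : MvPolynomial (Fin 2) ℂ →ₐ[ℂ] Polynomial ℂ :=
  aeval ![Polynomial.X, 1]

/-- let `H = c·∏ᵢ (z − zᵢw)^{mᵢ}` with `c ≠ 0`, the `zᵢ` pairwise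
distinct, `r ≥ 2`, `mᵢ ≥ 1`, `m = Σ mᵢ`, and set `G(u) = ∏ᵢ (u − zᵢ)^{mᵢ−1}`.
Then `G` divides the one-variable polynomials `H_z(u,1)` and `H_w(u,1)`, and
writing `H_z(u,1) = G·P`, `H_w(u,1) = G·Q`, the polynomials `P, Q` are coprime,
`P` has degree exactly `r − 1` with leading coefficient `m·c`, and `Q` has
degree at most `r − 1`. -/
theorem stmt9 (r : ℕ) (hr : 2 ≤ r) (c : ℂ) (hc : c ≠ 0) (z : Fin r → ℂ)
    (hz : Function.Injective z) (mi : Fin r → ℕ) (hmi : ∀ i, 1 ≤ mi i)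
    (m : ℕ) (hm : m = ∑ i, mi i)
    (H : MvPolynomial (Fin 2) ℂ)
    (hH : H = C c * ∏ i, (X (0 : Fin 2) - C (z i) * X (1 : Fin 2)) ^ mi i)
    (G : Polynomial ℂ)
    (hG : G = ∏ i, (Polynomial.X - Polynomial.C (z i)) ^ (mi i - 1)) :
    G ∣ subW1 (pderiv (0 : Fin 2) H) ∧
    G ∣ subW1 (pderiv (1 : Fin 2) H) ∧
    ∀ P Q : Polynomial ℂ,
      subW1 (pderiv (0 : Fin 2) H) = G * P →
      subW1 (pderiv (1 : Fin 2) H) = G * Q →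
      IsCoprime P Q ∧
      P.natDegree = r - 1 ∧ P.leadingCoeff = (m : ℂ) * c ∧
      Q.degree ≤ (r - 1 : ℕ) := by
  classical
  set E : Fin r → Polynomial ℂ :=
    fun i => ∏ j ∈ Finset.univ.erase i, (Polynomial.X - Polynomial.C (z j)) with hE
  set P₀ : Polynomial ℂ :=
    Polynomial.C c * ∑ i, (mi i : Polynomial ℂ) * E i with hP₀
  set Q₀ : Polynomial ℂ :=
    Polynomial.C c * ∑ i, (mi i : Polynomial ℂ) * (-Polynomial.C (z i)) * E i with hQ₀
  -- key factorization lemma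
  have hkey : ∀ i : Fin r,
      (∏ j ∈ Finset.univ.erase i, (Polynomial.X - Polynomial.C (z j)) ^ mi j) *
        (Polynomial.X - Polynomial.C (z i)) ^ (mi i - 1) = G * E i := by
    intro i
    have hpow : ∀ j : Fin r, (Polynomial.X - Polynomial.C (z j)) ^ mi j =
        (Polynomial.X - Polynomial.C (z j)) ^ (mi j - 1) *
          (Polynomial.X - Polynomial.C (z j)) := by
      intro j
      conv_lhs => rw [← Nat.sub_add_cancel (hmi j)]
      rw [pow_succ]
    calc (∏ j ∈ Finset.univ.erase i, (Polynomial.X - Polynomial.C (z j)) ^ mi j) *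
          (Polynomial.X - Polynomial.C (z i)) ^ (mi i - 1)
        = ((∏ j ∈ Finset.univ.erase i,
              (Polynomial.X - Polynomial.C (z j)) ^ (mi j - 1)) * E i) *
            (Polynomial.X - Polynomial.C (z i)) ^ (mi i - 1) := by
          rw [Finset.prod_congr rfl fun j _ => hpow j, Finset.prod_mul_distrib]
      _ = ((∏ j ∈ Finset.univ.erase i,
              (Polynomial.X - Polynomial.C (z j)) ^ (mi j - 1)) *
            (Polynomial.X - Polynomial.C (z i)) ^ (mi i - 1)) * E i := by ring
      _ = G * E i := by
          rw [Finset.prod_erase_mul _ _ (Finset.mem_univ i), hG]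
  -- the two substituted derivatives
  have hD0 : subW1 (pderiv (0 : Fin 2) H) = G * P₀ := by
    have h1 : subW1 (pderiv (0 : Fin 2) H) = Polynomial.C c * ∑ i,
        (∏ j ∈ Finset.univ.erase i, (Polynomial.X - Polynomial.C (z j)) ^ mi j) *
          ((mi i : Polynomial ℂ) * (Polynomial.X - Polynomial.C (z i)) ^ (mi i - 1)) := by
      rw [hH, pderiv_C_mul, pderiv_finset_prod]
      simp [subW1, pderiv_pow, pderiv_X]
    rw [h1, hP₀, Finset.sum_congr rfl fun i _ => show _ = (mi i : Polynomial ℂ) * (G * E i) by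
      rw [← hkey i]; ring]
    rw [Finset.sum_congr rfl fun i (_ : i ∈ Finset.univ) =>
      (mul_left_comm (mi i : Polynomial ℂ) G (E i)), ← Finset.mul_sum]
    ring
  have hD1 : subW1 (pderiv (1 : Fin 2) H) = G * Q₀ := by
    have h1 : subW1 (pderiv (1 : Fin 2) H) = Polynomial.C c * ∑ i,
        (∏ j ∈ Finset.univ.erase i, (Polynomial.X - Polynomial.C (z j)) ^ mi j) *
          ((mi i : Polynomial ℂ) * (Polynomial.X - Polynomial.C (z i)) ^ (mi i - 1) *
            (-Polynomial.C (z i))) := by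
      rw [hH, pderiv_C_mul, pderiv_finset_prod]
      simp [subW1, pderiv_pow, pderiv_X]
      left
      exact Finset.sum_congr rfl fun i _ => by ring
    rw [h1, hQ₀, Finset.sum_congr rfl fun i _ =>
      show _ = ((mi i : Polynomial ℂ) * (-Polynomial.C (z i))) * (G * E i) by
        rw [← hkey i]; ring]
    rw [Finset.sum_congr rfl fun i (_ : i ∈ Finset.univ) =>
      (mul_left_comm ((mi i : Polynomial ℂ) * (-Polynomial.C (z i))) G (E i)),
      ← Finset.mul_sum]
    ring
  -- basic degree facts about E
  have hEmonic : ∀ i, (E i).Monic := fun i =>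
    Polynomial.monic_prod_of_monic _ _ fun j _ => Polynomial.monic_X_sub_C _
  have hEdeg : ∀ i, (E i).natDegree = r - 1 := fun i => by
    rw [hE, Polynomial.natDegree_prod _ _ (fun j _ => Polynomial.X_sub_C_ne_zero (z j))]
    simp [Polynomial.natDegree_X_sub_C, Finset.card_erase_of_mem]
  have hEcoeff : ∀ i, (E i).coeff (r - 1) = 1 := fun i => by
    have h := (hEmonic i).leadingCoeff
    rwa [Polynomial.leadingCoeff, hEdeg i] at h
  have hmr : r ≤ m := by
    rw [hm]
    calc r = ∑ _i : Fin r, 1 := by simp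
    _ ≤ ∑ i, mi i := Finset.sum_le_sum fun i _ => hmi i
  have hmne : (m : ℂ) ≠ 0 := Nat.cast_ne_zero.mpr (by omega)
  have hsum_cast : ∑ i, (mi i : ℂ) = (m : ℂ) := by rw [hm]; push_cast; ring
  have hPcoeff : P₀.coeff (r - 1) = c * m := by
    rw [hP₀, Polynomial.coeff_C_mul, Polynomial.finset_sum_coeff,
      Finset.sum_congr rfl fun i _ => show ((mi i : Polynomial ℂ) * E i).coeff (r-1) = (mi i : ℂ) by
        rw [← Polynomial.C_eq_natCast, Polynomial.coeff_C_mul, hEcoeff i, mul_one],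
      hsum_cast]
  have hPdegle : P₀.natDegree ≤ r - 1 := by
    refine (Polynomial.natDegree_C_mul_le _ _).trans
      (Polynomial.natDegree_sum_le_of_forall_le _ _ fun i _ => ?_)
    rw [← Polynomial.C_eq_natCast]
    exact (Polynomial.natDegree_C_mul_le _ _).trans (hEdeg i).le
  have hP0ne : P₀ ≠ 0 := by
    intro h
    rw [h, Polynomial.coeff_zero] at hPcoeff
    exact mul_ne_zero hc hmne hPcoeff.symm
  have hPdeg : P₀.natDegree = r - 1 := le_antisymm hPdegle
    (Polynomial.le_natDegree_of_ne_zero (by rw [hPcoeff]; exact mul_ne_zero hc hmne))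
  have hPlead : P₀.leadingCoeff = (m : ℂ) * c := by
    rw [Polynomial.leadingCoeff, hPdeg, hPcoeff, mul_comm]
  have hQdegle : Q₀.natDegree ≤ r - 1 := by
    refine (Polynomial.natDegree_C_mul_le _ _).trans
      (Polynomial.natDegree_sum_le_of_forall_le _ _ fun i _ => ?_)
    rw [← Polynomial.C_eq_natCast, ← Polynomial.C_neg, ← Polynomial.C_mul]
    exact (Polynomial.natDegree_C_mul_le _ _).trans (hEdeg i).le
  have hfull : ∀ i : Fin r, (Polynomial.X - Polynomial.C (z i)) * E i
      = ∏ j, (Polynomial.X - Polynomial.C (z j)) :=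
    fun i => by simp only [hE]; exact Finset.mul_prod_erase Finset.univ (fun j => Polynomial.X - Polynomial.C (z j)) (Finset.mem_univ i)
  have hPQ : Polynomial.X * P₀ + Q₀
      = Polynomial.C ((m : ℂ) * c) * ∏ j, (Polynomial.X - Polynomial.C (z j)) := by
    rw [hP₀, hQ₀, Finset.mul_sum, Finset.mul_sum, Finset.mul_sum, ← Finset.sum_add_distrib,
      Finset.sum_congr rfl fun i (_ : i ∈ Finset.univ) =>
        show _ = (Polynomial.C c * (mi i : Polynomial ℂ)) *
            ∏ j, (Polynomial.X - Polynomial.C (z j)) by rw [← hfull i]; ring,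
      ← Finset.sum_mul, ← Finset.mul_sum]
    have : ∑ i, (mi i : Polynomial ℂ) = Polynomial.C (m : ℂ) := by
      rw [← hsum_cast]; push_cast; simp [Polynomial.C_eq_natCast]
    rw [this, ← Polynomial.C_mul, mul_comm c]
  have hevalP : ∀ k, P₀.eval (z k)
      = c * ((mi k : ℂ) * ∏ j ∈ Finset.univ.erase k, (z k - z j)) := by
    intro k
    rw [hP₀, Polynomial.eval_mul, Polynomial.eval_C, Polynomial.eval_finset_sum,
      Finset.sum_eq_single k (fun i _ hik => ?_) (fun h => absurd (Finset.mem_univ k) h)]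
    · rw [Polynomial.eval_mul, hE]
      simp [Polynomial.eval_prod]
    · have hk : k ∈ Finset.univ.erase i := Finset.mem_erase.mpr ⟨fun h => hik h.symm, Finset.mem_univ k⟩
      have hz0 : (E i).eval (z k) = 0 := by
        rw [hE, Polynomial.eval_prod]
        exact Finset.prod_eq_zero hk (by simp)
      rw [Polynomial.eval_mul, hz0, mul_zero]
  have hPne_at : ∀ k, P₀.eval (z k) ≠ 0 := by
    intro k
    rw [hevalP k]
    refine mul_ne_zero hc (mul_ne_zero (Nat.cast_ne_zero.mpr (by have := hmi k; omega)) ?_)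
    rw [Finset.prod_ne_zero_iff]
    intro j hj
    exact sub_ne_zero.mpr fun h => Finset.ne_of_mem_erase hj ((hz h).symm)
  have hcop : IsCoprime P₀ Q₀ := by
    rw [← EuclideanDomain.gcd_isUnit_iff]
    by_contra hnd
    set d := EuclideanDomain.gcd P₀ Q₀ with hd
    have hdP := EuclideanDomain.gcd_dvd_left P₀ Q₀
    have hdQ := EuclideanDomain.gcd_dvd_right P₀ Q₀
    have hd0 : d ≠ 0 := fun h => hP0ne (EuclideanDomain.gcd_eq_zero_iff.mp h).1
    have hdeg : 0 < d.degree := lt_of_le_of_ne (Polynomial.zero_le_degree_iff.mpr hd0)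
      (fun h => hnd (Polynomial.isUnit_iff_degree_eq_zero.mpr h.symm))
    obtain ⟨a, ha⟩ := Complex.exists_root hdeg
    have hevald : ∀ p : Polynomial ℂ, d ∣ p → p.eval a = 0 := by
      rintro p ⟨e, he⟩
      rw [he, Polynomial.eval_mul, show d.eval a = 0 from ha, zero_mul]
    have hPa : P₀.eval a = 0 := hevald _ hdP
    have hdR : d ∣ Polynomial.X * P₀ + Q₀ := (hdP.mul_left _).add hdQ
    rw [hPQ] at hdR
    have hRa := hevald _ hdR
    rw [Polynomial.eval_mul, Polynomial.eval_C, Polynomial.eval_prod] at hRa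
    rcases mul_eq_zero.mp hRa with h | h
    · exact mul_ne_zero hmne hc h
    · obtain ⟨k, _, hk⟩ := Finset.prod_eq_zero_iff.mp h
      simp only [Polynomial.eval_sub, Polynomial.eval_X, Polynomial.eval_C] at hk
      have hak : a = z k := by
        have := sub_eq_zero.mp hk
        exact this
      exact hPne_at k (hak ▸ hPa)
  have hGne : G ≠ 0 := by
    rw [hG]
    exact (Polynomial.monic_prod_of_monic _ _ fun i _ =>
      (Polynomial.monic_X_sub_C _).pow _).ne_zero
  refine ⟨⟨P₀, hD0⟩, ⟨Q₀, hD1⟩, fun P Q hP hQ => ?_⟩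
  have hPP : P = P₀ := (mul_left_cancel₀ hGne (hD0.symm.trans hP)).symm
  have hQQ : Q = Q₀ := (mul_left_cancel₀ hGne (hD1.symm.trans hQ)).symm
  rw [hPP, hQQ]
  exact ⟨hcop, hPdeg, hPlead,
    Polynomial.degree_le_natDegree.trans (by exact_mod_cast hQdegle)⟩
end

section
/- Let p : ℂ → ℂ be a polynomial of degree n ≥ 1 and let φ : ℂ → [0,∞] be a measurable function. Then ∫_ℂ φ(p(u))·|p'(u)|² dλ(u) = n · ∫_ℂ φ(w) dλ(w), where λ is Lebesgue measure on ℂ. -/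
open MeasureTheory

/-- for a polynomial `p : ℂ → ℂ` of degree `n ≥ 1` and a
measurable `φ : ℂ → [0,∞]`,
`∫_ℂ φ(p(u))·|p'(u)|² dλ(u) = n·∫_ℂ φ(w) dλ(w)`,
where `λ` is Lebesgue measure on `ℂ` and `|p'(u)|²` is the real Jacobian of
`p` viewed as a map `ℝ² → ℝ²`. -/
theorem stmt11 (p : Polynomial ℂ) (n : ℕ) (hn : 1 ≤ n)
    (hdeg : p.natDegree = n) (φ : ℂ → ENNReal) (hφ : Measurable φ) :
    ∫⁻ u : ℂ, φ (p.eval u) *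
        ((‖(Polynomial.derivative p).eval u‖₊ : ENNReal)) ^ 2 ∂volume
      = (n : ENNReal) * ∫⁻ w : ℂ, φ w ∂volume := by
  classical
  set f : ℂ → ENNReal := fun u => φ (p.eval u) *
      ((‖(Polynomial.derivative p).eval u‖₊ : ENNReal)) ^ 2 with hf
  -- basic nonvanishing facts
  have hd0 : p.derivative ≠ 0 := by
    intro h
    have := Polynomial.natDegree_eq_zero_of_derivative_eq_zero h
    omega
  -- critical points and values
  set K : Set ℂ := {u | p.derivative.eval u = 0} with hK
  have hKfin : K.Finite := Polynomial.finite_setOf_isRoot hd0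
  set Vs : Set ℂ := (fun u => p.eval u) '' K with hVs
  have hVsfin : Vs.Finite := hKfin.image _
  set B : Set ℂ := (fun u => p.eval u) ⁻¹' Vs with hB
  have hfib : ∀ v : ℂ, {u : ℂ | p.eval u = v}.Finite := by
    intro v
    have hq0 : p - Polynomial.C v ≠ 0 := by
      intro h
      have hnd : (p - Polynomial.C v).natDegree = n := by
        rw [Polynomial.natDegree_sub_C, hdeg]
      rw [h] at hnd
      simp at hnd
      omega
    have hfin := Polynomial.finite_setOf_isRoot hq0
    have : {u : ℂ | p.eval u = v} = {x | (p - Polynomial.C v).IsRoot x} := by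
      ext u
      simp [Polynomial.IsRoot, sub_eq_zero]
    rw [this]; exact hfin
  have hBfin : B.Finite := by
    have hBeq : B = ⋃ v ∈ Vs, {u : ℂ | p.eval u = v} := by
      ext u
      simp [hB, Set.mem_preimage]
    rw [hBeq]
    exact hVsfin.biUnion fun v _ => hfib v
  have hKB : K ⊆ B := fun u hu => Set.mem_preimage.2 (Set.mem_image_of_mem _ hu)
  have hBopen : IsOpen Bᶜ := hBfin.isClosed.isOpen_compl
  -- derivative data
  set D : ℂ → (ℂ →L[ℝ] ℂ) := fun u =>
    (ContinuousLinearMap.smulRight (1 : ℂ →L[ℂ] ℂ) (p.derivative.eval u)).restrictScalars ℝ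
    with hD
  have hderiv : ∀ u : ℂ, HasFDerivAt (fun z => p.eval z) (D u) u := fun u =>
    ((p.hasDerivAt u).hasFDerivAt).restrictScalars ℝ
  have hdet : ∀ u : ℂ, ENNReal.ofReal |(D u).det|
      = ((‖p.derivative.eval u‖₊ : ENNReal)) ^ 2 := by
    intro u
    set c := p.derivative.eval u
    have h1 : (((ContinuousLinearMap.smulRight (1 : ℂ →L[ℂ] ℂ) c).restrictScalars ℝ) : ℂ →ₗ[ℝ] ℂ)
        = Algebra.lmul ℝ ℂ c := by
      ext z
      simp [mul_comm]
    have h2 : (D u).det = Complex.normSq c := by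
      rw [hD, ContinuousLinearMap.det, h1, ← Algebra.norm_apply, Algebra.norm_complex_apply]
    rw [h2, abs_of_nonneg (Complex.normSq_nonneg c)]
    have h3 : Complex.normSq c = ‖c‖ ^ 2 := by
      rw [Complex.normSq_eq_norm_sq]
    rw [h3, ENNReal.ofReal_pow (norm_nonneg c), ofReal_norm, enorm_eq_nnnorm]
  -- injectivity neighborhoods
  have hloc : ∀ x : ℂ, ∃ U : Set ℂ, IsOpen U ∧ (x ∈ Bᶜ → x ∈ U) ∧ U ⊆ Bᶜ ∧
      Set.InjOn (fun z => p.eval z) U := by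
    intro x
    by_cases hx : p.derivative.eval x ≠ 0
    · have hs := (p.hasStrictDerivAt x).hasStrictFDerivAt_equiv hx
      refine ⟨(hs.toOpenPartialHomeomorph _).source ∩ Bᶜ,
        (OpenPartialHomeomorph.open_source _).inter hBopen,
        fun hxB => ⟨hs.mem_toOpenPartialHomeomorph_source, hxB⟩, Set.inter_subset_right, ?_⟩
      have h := (hs.toOpenPartialHomeomorph _).injOn
      rw [hs.toOpenPartialHomeomorph_coe] at h
      exact h.mono Set.inter_subset_left
    · refine ⟨∅, isOpen_empty, fun hxB => absurd (hKB (not_not.1 hx)) hxB,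
        Set.empty_subset _, fun a ha => absurd ha (Set.notMem_empty a)⟩
  choose W hWopen hWmem hWsub hWinj using hloc
  -- countable cover
  obtain ⟨t, hts, htc, htcov⟩ :=
    TopologicalSpace.countable_cover_nhdsWithin (s := Bᶜ) (f := W) fun x hx =>
      mem_nhdsWithin_of_mem_nhds ((hWopen x).mem_nhds (hWmem x hx))
  have htne : t.Nonempty := by
    rcases Set.nonempty_compl.2 (by
      intro h
      exact (Set.infinite_univ (α := ℂ)) (h ▸ hBfin : (Set.univ : Set ℂ).Finite)) with ⟨x, hx⟩
    rcases Set.mem_iUnion₂.1 (htcov hx) with ⟨y, hy, _⟩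
    exact ⟨y, hy⟩
  obtain ⟨g, hg⟩ := Set.Countable.exists_eq_range htc htne
  -- disjointified pieces
  set V : ℕ → Set ℂ := disjointed (fun k => W (g k)) with hV
  have hVmeas : ∀ k, MeasurableSet (V k) :=
    MeasurableSet.disjointed fun k => (hWopen (g k)).measurableSet
  have hVdisj : Pairwise (Function.onFun Disjoint V) := disjoint_disjointed _
  have hVsubW : ∀ k, V k ⊆ W (g k) := disjointed_subset _
  have hVinj : ∀ k, Set.InjOn (fun z => p.eval z) (V k) :=
    fun k => (hWinj (g k)).mono (hVsubW k)
  have hVunion : (⋃ k, V k) = Bᶜ := by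
    rw [hV, iUnion_disjointed]
    apply Set.Subset.antisymm
    · exact Set.iUnion_subset fun k => hWsub (g k)
    · intro x hx
      rcases Set.mem_iUnion₂.1 (htcov hx) with ⟨y, hy, hxW⟩
      rw [hg] at hy
      rcases hy with ⟨k, rfl⟩
      exact Set.mem_iUnion.2 ⟨k, hxW⟩
  -- measurable images
  have himg : ∀ k, MeasurableSet ((fun z => p.eval z) '' V k) := fun k =>
    (hVmeas k).image_of_continuousOn_injOn (p.continuous_aeval.continuousOn) (hVinj k)
  -- Step 1: restrict to Bᶜ
  have hBnull : volume B = 0 := hBfin.measure_zero _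
  have h1 : ∫⁻ u, f u ∂volume = ∫⁻ u in Bᶜ, f u ∂volume := by
    rw [← setLIntegral_univ]
    exact (setLIntegral_congr (ae_eq_univ.2 (by rwa [compl_compl]))).symm
  -- Step 2: split over pieces
  have h2 : ∫⁻ u in Bᶜ, f u ∂volume = ∑' k, ∫⁻ u in V k, f u ∂volume := by
    rw [← hVunion, lintegral_iUnion hVmeas hVdisj]
  -- Step 3: change of variables on each piece
  have h3 : ∀ k, ∫⁻ u in V k, f u ∂volume
      = ∫⁻ w in (fun z => p.eval z) '' V k, φ w ∂volume := by
    intro k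
    rw [lintegral_image_eq_lintegral_abs_det_fderiv_mul volume (hVmeas k)
      (fun x _ => (hderiv x).hasFDerivWithinAt) (hVinj k) φ]
    refine setLIntegral_congr_fun (hVmeas k) (fun x _ => ?_)
    rw [hf]
    simp only
    rw [hdet, mul_comm]
  -- Step 4: sum of integrals over images
  have h4 : ∑' k, ∫⁻ w in (fun z => p.eval z) '' V k, φ w ∂volume
      = ∫⁻ w, φ w * ∑' k, Set.indicator ((fun z => p.eval z) '' V k) (fun _ => (1 : ENNReal)) w
          ∂volume := by
    have e1 : ∀ k, ∫⁻ w in (fun z => p.eval z) '' V k, φ w ∂volume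
        = ∫⁻ w, Set.indicator ((fun z => p.eval z) '' V k) φ w ∂volume := fun k =>
      (lintegral_indicator (himg k) φ).symm
    simp_rw [e1]
    rw [← lintegral_tsum fun k => (hφ.indicator (himg k)).aemeasurable]
    congr 1
    ext w
    rw [← ENNReal.tsum_mul_left]
    congr 1
    ext k
    by_cases hw : w ∈ (fun z => p.eval z) '' V k
    · rw [Set.indicator_of_mem hw, Set.indicator_of_mem hw, mul_one]
    · rw [Set.indicator_of_notMem hw, Set.indicator_of_notMem hw, mul_zero]
  -- Step 5: the multiplicity is n a.e.
  have h5 : ∀ w : ℂ, w ∉ Vs →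
      (∑' k, Set.indicator ((fun z => p.eval z) '' V k) (fun _ => (1 : ENNReal)) w)
        = (n : ENNReal) := by
    intro w hw
    -- the fiber
    set q := p - Polynomial.C w with hq
    have hqd : q.natDegree = n := by rw [hq, Polynomial.natDegree_sub_C, hdeg]
    have hq0 : q ≠ 0 := by
      intro h
      rw [h] at hqd
      simp at hqd
      omega
    have hroots : q.roots.card = n := by
      rw [← hqd]
      exact Polynomial.splits_iff_card_roots.mp (IsAlgClosed.splits q)
    have hnodup : q.roots.Nodup := by
      rw [Multiset.nodup_iff_count_le_one]
      intro a
      rw [Polynomial.count_roots]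
      by_contra h
      have h1 : 1 < q.rootMultiplicity a := by omega
      rw [Polynomial.one_lt_rootMultiplicity_iff_isRoot hq0] at h1
      obtain ⟨hra, hda⟩ := h1
      have hde : q.derivative = p.derivative := by
        rw [hq, Polynomial.derivative_sub, Polynomial.derivative_C, sub_zero]
      rw [Polynomial.IsRoot, hde] at hda
      have hpa : p.eval a = w := by
        have := hra
        rwa [Polynomial.IsRoot, hq, Polynomial.eval_sub, Polynomial.eval_C, sub_eq_zero] at this
      exact hw (hpa ▸ Set.mem_image_of_mem _ (show a ∈ K from hda))
    set R : Finset ℂ := q.roots.toFinset with hR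
    have hRmem : ∀ u : ℂ, u ∈ R ↔ p.eval u = w := by
      intro u
      rw [hR, Multiset.mem_toFinset, Polynomial.mem_roots hq0]
      simp [Polynomial.IsRoot, hq, sub_eq_zero]
    have hRcard : R.card = n := by
      rw [hR, Multiset.toFinset_card_of_nodup hnodup, hroots]
    -- roots avoid B
    have hRB : ∀ u ∈ R, u ∈ Bᶜ := by
      intro u hu
      rw [hRmem] at hu
      intro hub
      exact hw (hu ▸ hub)
    -- each summand equals a finite sum of indicators of V k over roots
    have key : ∀ k, Set.indicator ((fun z => p.eval z) '' V k) (fun _ => (1 : ENNReal)) w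
        = ∑ u ∈ R, Set.indicator (V k) (fun _ => (1 : ENNReal)) u := by
      intro k
      by_cases hwk : w ∈ (fun z => p.eval z) '' V k
      · rcases hwk with ⟨u₀, hu₀V, hu₀w⟩
        have hu₀R : u₀ ∈ R := (hRmem u₀).2 hu₀w
        have hwmem : w ∈ (fun z => p.eval z) '' V k := ⟨u₀, hu₀V, hu₀w⟩
        rw [Set.indicator_of_mem hwmem]
        rw [Finset.sum_eq_single u₀]
        · rw [Set.indicator_of_mem hu₀V]
        · intro b hb hbne
          rw [Set.indicator_of_notMem]
          intro hbV
          exact hbne (hVinj k hbV hu₀V (show p.eval b = p.eval u₀ from ((hRmem b).1 hb).trans hu₀w.symm))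
        · intro h; exact absurd hu₀R h
      · rw [Set.indicator_of_notMem hwk]
        symm
        apply Finset.sum_eq_zero
        intro u hu
        rw [Set.indicator_of_notMem]
        intro huV
        exact hwk ⟨u, huV, (hRmem u).1 hu⟩
    calc (∑' k, Set.indicator ((fun z => p.eval z) '' V k) (fun _ => (1 : ENNReal)) w)
        = ∑' k, ∑ u ∈ R, Set.indicator (V k) (fun _ => (1 : ENNReal)) u := by
          simp_rw [key]
      _ = ∑ u ∈ R, ∑' k, Set.indicator (V k) (fun _ => (1 : ENNReal)) u := by
          rw [Summable.tsum_finsetSum fun i _ => ENNReal.summable]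
      _ = ∑ u ∈ R, 1 := by
          apply Finset.sum_congr rfl
          intro u hu
          have huB : u ∈ ⋃ k, V k := hVunion ▸ hRB u hu
          rcases Set.mem_iUnion.1 huB with ⟨k₀, hk₀⟩
          rw [tsum_eq_single k₀]
          · rw [Set.indicator_of_mem hk₀]
          · intro k hk
            rw [Set.indicator_of_notMem]
            intro hkV
            exact (hVdisj hk).le_bot ⟨hkV, hk₀⟩
      _ = (n : ENNReal) := by rw [Finset.sum_const, hRcard]; simp
  -- put everything together
  have hVsnull : volume Vs = 0 := hVsfin.measure_zero _
  have hae : ∀ᵐ w : ℂ ∂volume, w ∉ Vs := by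
    rw [ae_iff]
    simpa using hVsnull
  calc ∫⁻ u, f u ∂volume
      = ∑' k, ∫⁻ u in V k, f u ∂volume := by rw [h1, h2]
    _ = ∑' k, ∫⁻ w in (fun z => p.eval z) '' V k, φ w ∂volume := by simp_rw [h3]
    _ = ∫⁻ w, φ w * ∑' k, Set.indicator ((fun z => p.eval z) '' V k)
          (fun _ => (1 : ENNReal)) w ∂volume := h4
    _ = ∫⁻ w, φ w * (n : ENNReal) ∂volume := by
        apply lintegral_congr_ae
        filter_upwards [hae] with w hw
        rw [h5 w hw]
    _ = (n : ENNReal) * ∫⁻ w, φ w ∂volume := by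
        rw [lintegral_mul_const _ hφ, mul_comm]
end
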